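/- arXiv:1910.08661 — 6 statements merged into one kernel-verified Lean document; each statement's English description precedes it below -/
import Mathlib

section
/- There is a positive constant η such that for every integer k ≥ 2 and every integer n with n ≥ η⁻¹ k log k, the number of integers in {1, 2, …, n} that are relatively prime to each of 1, 2, …, k (equivalently, have no prime factor at most k) is at least η n / log k. Here log denotes the natural logarithm. -/
open Finset

namespace IAPS

def Pfin (N : ℕ) : Finset ℕ := (Finset.range (N+1)).filter Nat.Prime

lemma mem_Pfin {p N : ℕ} : p ∈ Pfin N ↔ p ≤ N ∧ p.Prime := by
  simp [Pfin, Nat.lt_succ_iff]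

lemma Pfin_mono {M N : ℕ} (h : M ≤ N) : Pfin M ⊆ Pfin N := by
  intro p hp; rw [mem_Pfin] at *; exact ⟨hp.1.trans h, hp.2⟩

lemma harmonic_lower (N : ℕ) : Real.log (N+1) ≤ ∑ m ∈ Icc 1 N, (m:ℝ)⁻¹ := by
  induction N with
  | zero => simp
  | succ N ih =>
    rw [Finset.sum_Icc_succ_top (by omega)]
    have h1 : Real.log ((N:ℝ)+1+1) - Real.log ((N:ℝ)+1) ≤ ((N:ℝ)+1)⁻¹ := by
      rw [← Real.log_div (by positivity) (by positivity)]
      have := Real.log_le_sub_one_of_pos (x := ((N:ℝ)+1+1)/((N:ℝ)+1)) (by positivity)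
      have h2 : ((N:ℝ)+1+1)/((N:ℝ)+1) - 1 = ((N:ℝ)+1)⁻¹ := by field_simp; ring
      linarith
    push_cast
    linarith

lemma log_le_div_add {a x : ℝ} (ha : 0 < a) (hx : 0 < x) :
    Real.log x ≤ x/a + Real.log a - 1 := by
  have h1 : Real.log (x/a) ≤ x/a - 1 := Real.log_le_sub_one_of_pos (by positivity)
  rw [Real.log_div (ne_of_gt hx) (ne_of_gt ha)] at h1
  linarith

lemma cheb_lower {N : ℕ} (hN : 64 ≤ N) :
    (N:ℝ)/(2 * Real.log N) ≤ ((Pfin N).card : ℝ) := by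
  set n := N/2 with hn
  have hn4 : 4 ≤ n := by omega
  have h2nN : 2*n ≤ N := by omega
  have h2nN' : N ≤ 2*n + 1 := by omega
  -- centralBinom n ≤ (2n)^(card (Pfin (2n)))
  have hcb : n.centralBinom ≠ 0 := (Nat.centralBinom_pos n).ne'
  have h2 : n.centralBinom ≤ (2*n)^((Pfin (2*n)).card) := by
    have hfact := Nat.factorization_prod_pow_eq_self hcb
    have hsupp : n.centralBinom.factorization.support = n.centralBinom.primeFactors :=
      Nat.support_factorization _
    have hprod : ∏ p ∈ n.centralBinom.primeFactors, p ^ (n.centralBinom.factorization p)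
        = n.centralBinom := by
      rw [← hsupp]; exact hfact
    have hsub : n.centralBinom.primeFactors ⊆ Pfin (2*n) := by
      intro p hp
      have hpp := Nat.prime_of_mem_primeFactors hp
      have hppos : p ∈ n.centralBinom.factorization.support := by rw [hsupp]; exact hp
      have h1le : 1 ≤ n.centralBinom.factorization p := Nat.pos_of_ne_zero (by
        simpa using Finsupp.mem_support_iff.mp hppos)
      have hle : p ^ (n.centralBinom.factorization p) ≤ 2*n := by
        have : n.centralBinom = (2*n).choose n := rfl
        rw [this]
        exact Nat.pow_factorization_choose_le (by omega)
      have : p ≤ 2*n := le_trans (by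
        calc p = p^1 := (pow_one p).symm
        _ ≤ p ^ (n.centralBinom.factorization p) :=
          Nat.pow_le_pow_right hpp.one_lt.le h1le) hle
      exact mem_Pfin.mpr ⟨this, hpp⟩
    calc n.centralBinom = ∏ p ∈ n.centralBinom.primeFactors, p ^ (n.centralBinom.factorization p) := hprod.symm
      _ ≤ ∏ _p ∈ n.centralBinom.primeFactors, 2*n := by
          apply Finset.prod_le_prod'
          intro p hp
          have : n.centralBinom = (2*n).choose n := rfl
          rw [this]; exact Nat.pow_factorization_choose_le (by omega)
      _ = (2*n)^(n.centralBinom.primeFactors.card) := Finset.prod_const _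
      _ ≤ (2*n)^((Pfin (2*n)).card) := Nat.pow_le_pow_right (by omega)
            (Finset.card_le_card hsub)
  have h1 : 4^n < n * n.centralBinom := Nat.four_pow_lt_mul_centralBinom n hn4
  have h3 : (4:ℕ)^n < n * (2*n)^((Pfin (2*n)).card) :=
    lt_of_lt_of_le h1 (Nat.mul_le_mul_left n h2)
  -- cast and take logs
  have hcard : ((Pfin (2*n)).card : ℝ) ≤ ((Pfin N).card : ℝ) := by
    exact_mod_cast Finset.card_le_card (Pfin_mono h2nN)
  set C := ((Pfin N).card : ℝ) with hC
  have hC0 : 0 ≤ C := Nat.cast_nonneg _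
  have hlogN : 0 < Real.log N := Real.log_pos (by exact_mod_cast (by omega : 1 < N))
  have hlog : (n:ℝ) * Real.log 4 ≤ Real.log n + C * Real.log N := by
    have hcast : (4:ℝ)^n ≤ (n:ℝ) * ((2*n:ℕ):ℝ)^((Pfin (2*n)).card) := by
      exact_mod_cast h3.le
    have hlog1 : Real.log ((4:ℝ)^n) ≤ Real.log ((n:ℝ) * ((2*n:ℕ):ℝ)^((Pfin (2*n)).card)) := by
      apply Real.log_le_log (by positivity) hcast
    rw [Real.log_pow, Real.log_mul (by positivity) (by positivity), Real.log_pow] at hlog1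
    have hl2n : Real.log ((2*n:ℕ):ℝ) ≤ Real.log N :=
      Real.log_le_log (by positivity) (by exact_mod_cast h2nN)
    calc (n:ℝ) * Real.log 4 ≤ Real.log n + ((Pfin (2*n)).card:ℝ) * Real.log ((2*n:ℕ):ℝ) := hlog1
      _ ≤ Real.log n + C * Real.log N := by
          have hln2n : (0:ℝ) ≤ Real.log ((2*n:ℕ):ℝ) :=
            Real.log_nonneg (by exact_mod_cast (by omega : 1 ≤ 2*n))
          nlinarith [mul_le_mul hcard hl2n hln2n hC0]
  -- numeric conclusion
  have hlogn : Real.log n ≤ Real.log N := Real.log_le_log (by positivity) (by exact_mod_cast (by omega : n ≤ N))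
  have hng : ((N:ℝ) - 1)/2 ≤ (n:ℝ) := by
    have : (N:ℝ) ≤ 2*(n:ℝ) + 1 := by exact_mod_cast h2nN'
    linarith
  have hl2 : (0.6931 : ℝ) < Real.log 2 := by
    have := Real.log_two_gt_d9; norm_num at this ⊢; linarith
  have hl2' : Real.log 2 < 0.6932 := by
    have := Real.log_two_lt_d9; norm_num at this ⊢; linarith
  have hlog4 : Real.log 4 = 2 * Real.log 2 := by
    rw [show (4:ℝ) = 2^2 by norm_num, Real.log_pow]; push_cast; ring
  have hlogN64 : Real.log N ≤ (N:ℝ)/64 + Real.log 64 - 1 :=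
    log_le_div_add (by norm_num) (by exact_mod_cast (by omega : 0 < N))
  have hlog64 : Real.log 64 = 6 * Real.log 2 := by
    rw [show (64:ℝ) = 2^6 by norm_num, Real.log_pow]; push_cast; ring
  have hN' : (64:ℝ) ≤ (N:ℝ) := by exact_mod_cast hN
  -- key: N/2 ≤ n * log 4 - log N
  have hkey : (N:ℝ)/2 + Real.log N ≤ (n:ℝ) * Real.log 4 := by
    have : ((N:ℝ)-1)/2 * Real.log 4 ≤ (n:ℝ) * Real.log 4 := by
      apply mul_le_mul_of_nonneg_right hng (by rw [hlog4]; linarith)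
    nlinarith [hlogN64, hlog64, hl2, hl2', hN']
  -- conclude
  rw [div_le_iff₀ (by positivity)]
  nlinarith [hlog, hlogn, hlogN, hC0]


-- product of coprime prime powers divides
lemma prod_pow_dvd {m : ℕ} (s : Finset ℕ) (e : ℕ → ℕ)
    (hp : ∀ p ∈ s, p.Prime) (hd : ∀ p ∈ s, p ^ e p ∣ m) :
    (∏ p ∈ s, p ^ e p) ∣ m := by
  induction s using Finset.induction with
  | empty => simpa using one_dvd m
  | insert a t hx ih =>
    rw [Finset.prod_insert hx]
    have hco : (a ^ e a).Coprime (∏ p ∈ t, p ^ e p) := by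
      apply Nat.Coprime.prod_right
      intro q hq
      have haq : a ≠ q := fun h => hx (h ▸ hq)
      exact Nat.Coprime.pow _ _ ((Nat.coprime_primes (hp a (mem_insert_self a t))
        (hp q (mem_insert_of_mem hq))).mpr haq)
    exact hco.mul_dvd_of_dvd_of_dvd (hd a (mem_insert_self a t))
      (ih (fun p hpt => hp p (mem_insert_of_mem hpt))
          (fun p hpt => hd p (mem_insert_of_mem hpt)))

lemma pow_div_dvd_factorial {N p : ℕ} (hp : p.Prime) (hN : 1 ≤ N) :
    p ^ (N / p) ∣ Nat.factorial N := by
  rw [Nat.Prime.pow_dvd_factorial_iff hp (show Nat.log p N < N + 1 from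
    lt_of_le_of_lt (Nat.log_le_self p N) (Nat.lt_succ_self N))]
  calc N / p = N / p ^ 1 := by rw [pow_one]
    _ ≤ ∑ i ∈ Ico 1 (N+1), N / p ^ i := by
      apply Finset.single_le_sum (f := fun i => N / p ^ i) (fun i _ => Nat.zero_le _)
      simp only [Finset.mem_Ico]
      omega

lemma log_factorial_le (N : ℕ) : Real.log (Nat.factorial N) ≤ (N:ℝ) * Real.log N := by
  have h : (Nat.factorial N : ℝ) = ∏ x ∈ range N, ((x:ℝ) + 1) := by
    rw [show ∏ x ∈ range N, ((x:ℝ) + 1) = ((∏ x ∈ range N, (x + 1) : ℕ) : ℝ) by push_cast; rfl]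
    rw [Finset.prod_range_add_one_eq_factorial]
  rw [h, Real.log_prod (fun i _ => by positivity)]
  calc ∑ i ∈ range N, Real.log ((i:ℝ)+1) ≤ ∑ _i ∈ range N, Real.log N := by
        apply Finset.sum_le_sum
        intro i hi
        have : (i:ℝ) + 1 ≤ (N:ℝ) := by
          have := Finset.mem_range.mp hi; exact_mod_cast this
        exact Real.log_le_log (by positivity) this
    _ = (N:ℝ) * Real.log N := by
        rw [Finset.sum_const, Finset.card_range]; simp [nsmul_eq_mul]

lemma theta_le (N : ℕ) : ∑ p ∈ Pfin N, Real.log p ≤ (N:ℝ) * Real.log 4 := by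
  have h : ∑ p ∈ Pfin N, Real.log p = Real.log (primorial N) := by
    rw [show ((primorial N : ℕ):ℝ) = ∏ p ∈ Pfin N, (p:ℝ) by
      rw [← Nat.cast_prod]; rfl]
    rw [Real.log_prod (fun p hp => by
      have := (mem_Pfin.mp hp).2.pos; positivity)]
  rw [h]
  calc Real.log (primorial N) ≤ Real.log ((4:ℕ)^N : ℕ) :=
      Real.log_le_log (by exact_mod_cast primorial_pos N) (by exact_mod_cast primorial_le_4_pow N)
    _ = (N:ℝ) * Real.log 4 := by push_cast [Real.log_pow]; norm_num

lemma mertens1 {N : ℕ} (hN : 1 ≤ N) :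
    ∑ p ∈ Pfin N, Real.log p / p ≤ Real.log N + Real.log 4 := by
  have hdvd : (∏ p ∈ Pfin N, p ^ (N / p)) ∣ Nat.factorial N :=
    prod_pow_dvd _ _ (fun p hp => (mem_Pfin.mp hp).2)
      (fun p hp => pow_div_dvd_factorial (mem_Pfin.mp hp).2 hN)
  have hlogd : ∑ p ∈ Pfin N, ((N/p : ℕ):ℝ) * Real.log p ≤ (N:ℝ) * Real.log N := by
    have h1 : ((∏ p ∈ Pfin N, p ^ (N / p) : ℕ) : ℝ) = ∏ p ∈ Pfin N, (p:ℝ) ^ (N/p) := by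
      push_cast; rfl
    have h2 : Real.log ((∏ p ∈ Pfin N, p ^ (N / p) : ℕ) : ℝ)
        = ∑ p ∈ Pfin N, ((N/p : ℕ):ℝ) * Real.log p := by
      rw [h1, Real.log_prod (fun p hp => by
        have := (mem_Pfin.mp hp).2.pos; positivity)]
      congr 1; ext p; rw [Real.log_pow]
    rw [← h2]
    calc Real.log ((∏ p ∈ Pfin N, p ^ (N / p) : ℕ) : ℝ)
        ≤ Real.log (Nat.factorial N : ℝ) := Real.log_le_log
          (by exact_mod_cast Finset.prod_pos (fun p hp => pow_pos (mem_Pfin.mp hp).2.pos _))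
          (by exact_mod_cast Nat.le_of_dvd (Nat.factorial_pos N) hdvd)
      _ ≤ (N:ℝ) * Real.log N := log_factorial_le N
  -- (N:ℝ)/p ≤ (N/p : ℕ) + 1
  have hdiv : ∀ p ∈ Pfin N, (N:ℝ)/p * Real.log p ≤ (((N/p : ℕ):ℝ) + 1) * Real.log p := by
    intro p hp
    have hpp := (mem_Pfin.mp hp).2
    have h1 : (N:ℝ)/p ≤ ((N/p : ℕ):ℝ) + 1 := by
      rw [div_le_iff₀ (by exact_mod_cast hpp.pos)]
      have hlt : N < (N/p + 1) * p := by
        calc N = p * (N/p) + N % p := (Nat.div_add_mod N p).symm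
          _ < p * (N/p) + p := Nat.add_lt_add_left (Nat.mod_lt N hpp.pos) _
          _ = (N/p + 1) * p := by ring
      exact_mod_cast hlt.le
    exact mul_le_mul_of_nonneg_right h1 (Real.log_nonneg (by exact_mod_cast hpp.one_lt.le))
  have hsum : ∑ p ∈ Pfin N, (N:ℝ)/p * Real.log p
      ≤ (N:ℝ) * Real.log N + (N:ℝ) * Real.log 4 := by
    calc ∑ p ∈ Pfin N, (N:ℝ)/p * Real.log p
        ≤ ∑ p ∈ Pfin N, (((N/p : ℕ):ℝ) + 1) * Real.log p := Finset.sum_le_sum hdiv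
      _ = ∑ p ∈ Pfin N, ((N/p : ℕ):ℝ) * Real.log p + ∑ p ∈ Pfin N, Real.log p := by
          rw [← Finset.sum_add_distrib]; congr 1; ext p; ring
      _ ≤ (N:ℝ) * Real.log N + (N:ℝ) * Real.log 4 := add_le_add hlogd (theta_le N)
  have hNpos : (0:ℝ) < N := by exact_mod_cast hN
  have : ∑ p ∈ Pfin N, (N:ℝ)/p * Real.log p = (N:ℝ) * ∑ p ∈ Pfin N, Real.log p / p := by
    rw [Finset.mul_sum]; congr 1; ext p; ring
  rw [this] at hsum
  exact le_of_mul_le_mul_left (by linarith) hNpos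


lemma sum_Pfin_succ (f : ℕ → ℝ) (N : ℕ) :
    ∑ p ∈ Pfin (N+1), f p
      = ∑ p ∈ Pfin N, f p + (if (N+1).Prime then f (N+1) else 0) := by
  unfold Pfin
  rw [Finset.range_add_one, Finset.filter_insert]
  by_cases h : (N+1).Prime
  · simp only [h, if_true]
    rw [Finset.sum_insert (by simp)]
    ring
  · simp [h]

lemma log2_pos : (0:ℝ) < Real.log 2 := Real.log_pos (by norm_num)

lemma one_sub_inv_le_log {x : ℝ} (hx : 0 < x) : 1 - x⁻¹ ≤ Real.log x := by
  have h := Real.log_le_sub_one_of_pos (show (0:ℝ) < x⁻¹ by positivity)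
  rw [Real.log_inv] at h
  linarith

lemma mertens2_aux (N : ℕ) (hN : 2 ≤ N) :
    ∑ p ∈ Pfin N, ((p:ℝ))⁻¹
      ≤ (∑ p ∈ Pfin N, Real.log p / p) / Real.log N
        + Real.log (Real.log N) - Real.log (Real.log 2)
        + Real.log 4 * ((Real.log 2)⁻¹ - (Real.log N)⁻¹) := by
  induction N, hN using Nat.le_induction with
  | base =>
    have h2 : Pfin 2 = {2} := by decide
    have hl2 := log2_pos
    rw [h2]
    simp only [Finset.sum_singleton, Nat.cast_ofNat]
    have h3 : Real.log 2 / 2 / Real.log 2 = 2⁻¹ := by field_simp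
    rw [h3]
    ring_nf
    exact le_refl _
  | succ N hN ih =>
    have hN1 : (1:ℝ) < (N:ℝ) := by exact_mod_cast hN
    have hL : Real.log 2 ≤ Real.log N :=
      Real.log_le_log (by norm_num) (by exact_mod_cast hN)
    have hLpos : 0 < Real.log N := lt_of_lt_of_le log2_pos hL
    have hL' : Real.log N < Real.log ((N+1:ℕ):ℝ) := by
      apply Real.log_lt_log (by positivity)
      push_cast; linarith
    have hL'pos : 0 < Real.log ((N+1:ℕ):ℝ) := lt_trans hLpos hL'
    set L := Real.log (N:ℝ) with hLdef
    set L' := Real.log ((N+1:ℕ):ℝ) with hL'def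
    rw [sum_Pfin_succ (fun p => ((p:ℝ))⁻¹) N, sum_Pfin_succ (fun p => Real.log p / p) N]
    set t : ℝ := if (N+1).Prime then (((N+1:ℕ)):ℝ)⁻¹ else 0 with ht
    have htt : (if (N+1).Prime then Real.log ((N+1:ℕ):ℝ) / ((N+1:ℕ):ℝ) else 0) = t * L' := by
      by_cases h : (N+1).Prime
      · simp only [h, if_true, ht]; ring
      · simp [h, ht]
    rw [htt]
    set A := ∑ p ∈ Pfin N, Real.log p / p with hA
    set M := ∑ p ∈ Pfin N, ((p:ℝ))⁻¹ with hM
    have hAle : A - Real.log 4 ≤ L := by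
      have := mertens1 (N := N) (by omega)
      simp only [← hA] at this; linarith
    have hLne : L ≠ 0 := ne_of_gt hLpos
    have hL'ne : L' ≠ 0 := ne_of_gt hL'pos
    have hkey : A/L - A/L' + Real.log 4 * (L'⁻¹ - L⁻¹) ≤ Real.log L' - Real.log L := by
      have hdelta : (0:ℝ) ≤ L⁻¹ - L'⁻¹ := by
        have : L'⁻¹ ≤ L⁻¹ := inv_anti₀ hLpos hL'.le
        linarith
      have h1 : A/L - A/L' + Real.log 4 * (L'⁻¹ - L⁻¹) = (A - Real.log 4) * (L⁻¹ - L'⁻¹) := by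
        field_simp
        ring
      have h2 : (A - Real.log 4) * (L⁻¹ - L'⁻¹) ≤ L * (L⁻¹ - L'⁻¹) :=
        mul_le_mul_of_nonneg_right hAle hdelta
      have h3 : L * (L⁻¹ - L'⁻¹) = 1 - L/L' := by field_simp
      have h4 : 1 - (L'/L)⁻¹ ≤ Real.log (L'/L) := one_sub_inv_le_log (by positivity)
      rw [Real.log_div hL'ne hLne] at h4
      have h5 : (L'/L)⁻¹ = L/L' := by field_simp
      rw [h5] at h4
      linarith [h1, h2, h3]
    have hsplit : (A + t * L') / L' = A/L' + t := by field_simp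
    rw [hsplit]
    linarith [ih, hkey]

lemma telescope_sum (k : ℕ) (hk : 1 ≤ k) :
    ∑ m ∈ Icc 2 k, ((m:ℝ) * ((m:ℝ) - 1))⁻¹ = 1 - (k:ℝ)⁻¹ := by
  induction k with
  | zero => omega
  | succ k ih =>
    by_cases hk1 : 1 ≤ k
    · rw [Finset.sum_Icc_succ_top (by omega)]
      rw [ih hk1]
      have hk0 : (k:ℝ) ≠ 0 := by positivity
      have : ((k:ℝ)+1) ≠ 0 := by positivity
      push_cast
      field_simp
      ring_nf
      rw [mul_inv_cancel₀ hk0]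
      ring
    · have : k = 0 := by omega
      subst this
      simp

lemma mertens2 {N : ℕ} (hN : 2 ≤ N) :
    ∑ p ∈ Pfin N, ((p:ℝ))⁻¹ ≤ Real.log (Real.log N) + 6 := by
  have h := mertens2_aux N hN
  have hL : Real.log 2 ≤ Real.log N :=
    Real.log_le_log (by norm_num) (by exact_mod_cast hN)
  have hLpos : 0 < Real.log N := lt_of_lt_of_le log2_pos hL
  have hA := mertens1 (N := N) (by omega)
  have hl4 : Real.log 4 = 2 * Real.log 2 := by
    rw [show (4:ℝ) = 2^2 by norm_num, Real.log_pow]; push_cast; ring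
  have h1 : (∑ p ∈ Pfin N, Real.log p / p) / Real.log N ≤ 1 + Real.log 4 / Real.log N := by
    rw [div_le_iff₀ hLpos]
    have : (1 + Real.log 4 / Real.log N) * Real.log N = Real.log N + Real.log 4 := by
      field_simp
    rw [this]; exact hA
  have h2 : Real.log 4 / Real.log N ≤ 2 := by
    rw [hl4, div_le_iff₀ hLpos]
    nlinarith [log2_pos]
  have h3 : - Real.log (Real.log 2) ≤ 1/2 := by
    have hgt : (0.6931:ℝ) < Real.log 2 := by
      have := Real.log_two_gt_d9; norm_num at this ⊢; linarith
    have := one_sub_inv_le_log log2_pos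
    have hinv : (Real.log 2)⁻¹ ≤ 1.5 := by
      rw [inv_le_comm₀ log2_pos (by norm_num)]
      linarith
    linarith
  have h4 : Real.log 4 * ((Real.log 2)⁻¹ - (Real.log N)⁻¹) ≤ 2 := by
    have hNinv : 0 ≤ (Real.log N)⁻¹ := by positivity
    have : (Real.log 2)⁻¹ - (Real.log N)⁻¹ ≤ (Real.log 2)⁻¹ := by linarith
    have hl4pos : 0 ≤ Real.log 4 := by rw [hl4]; positivity
    calc Real.log 4 * ((Real.log 2)⁻¹ - (Real.log N)⁻¹) ≤ Real.log 4 * (Real.log 2)⁻¹ :=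
        mul_le_mul_of_nonneg_left this hl4pos
      _ = 2 := by rw [hl4]; field_simp
  linarith [h, h1, h2, h3, h4]

lemma eulerprod {k : ℕ} (hk : 2 ≤ k) :
    ∏ p ∈ Pfin k, (1 - (p:ℝ)⁻¹)⁻¹ ≤ Real.exp 7 * Real.log k := by
  have hstep : ∀ p ∈ Pfin k, (1 - (p:ℝ)⁻¹)⁻¹ ≤ Real.exp (((p:ℝ) - 1)⁻¹) := by
    intro p hp
    have hp2 : 2 ≤ p := (mem_Pfin.mp hp).2.two_le
    have hp2' : (2:ℝ) ≤ (p:ℝ) := by exact_mod_cast hp2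
    have heq : (1 - (p:ℝ)⁻¹)⁻¹ = 1 + ((p:ℝ) - 1)⁻¹ := by
      have h1 : (p:ℝ) ≠ 0 := by linarith
      have h2 : (p:ℝ) - 1 ≠ 0 := by linarith
      field_simp
      ring
    rw [heq]
    have := Real.add_one_le_exp (((p:ℝ) - 1)⁻¹)
    linarith
  have hpos : ∀ p ∈ Pfin k, (0:ℝ) ≤ (1 - (p:ℝ)⁻¹)⁻¹ := by
    intro p hp
    have hp2 : (2:ℝ) ≤ (p:ℝ) := by exact_mod_cast (mem_Pfin.mp hp).2.two_le
    have : (p:ℝ)⁻¹ ≤ 1/2 := by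
      rw [inv_le_comm₀ (by linarith) (by norm_num)]; linarith
    have h0 : (0:ℝ) < 1 - (p:ℝ)⁻¹ := by linarith
    exact inv_nonneg.mpr h0.le
  calc ∏ p ∈ Pfin k, (1 - (p:ℝ)⁻¹)⁻¹
      ≤ ∏ p ∈ Pfin k, Real.exp (((p:ℝ) - 1)⁻¹) :=
        Finset.prod_le_prod hpos hstep
    _ = Real.exp (∑ p ∈ Pfin k, ((p:ℝ) - 1)⁻¹) := by
        rw [Real.exp_sum]
    _ ≤ Real.exp 7 * Real.log k := by
        have hsum : ∑ p ∈ Pfin k, ((p:ℝ) - 1)⁻¹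
            ≤ ∑ p ∈ Pfin k, ((p:ℝ)⁻¹ + ((p:ℝ) * ((p:ℝ) - 1))⁻¹) := by
          apply Finset.sum_le_sum
          intro p hp
          have hp2 : (2:ℝ) ≤ (p:ℝ) := by exact_mod_cast (mem_Pfin.mp hp).2.two_le
          have h1 : (p:ℝ) ≠ 0 := by linarith
          have h2 : (p:ℝ) - 1 ≠ 0 := by linarith
          have : ((p:ℝ) - 1)⁻¹ = (p:ℝ)⁻¹ + ((p:ℝ) * ((p:ℝ) - 1))⁻¹ := by
            field_simp
            ring
          rw [this]
        have htel : ∑ p ∈ Pfin k, ((p:ℝ) * ((p:ℝ) - 1))⁻¹ ≤ 1 := by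
          have hsub : Pfin k ⊆ Icc 2 k := by
            intro p hp
            rw [mem_Pfin] at hp
            exact Finset.mem_Icc.mpr ⟨hp.2.two_le, hp.1⟩
          calc ∑ p ∈ Pfin k, ((p:ℝ) * ((p:ℝ) - 1))⁻¹
              ≤ ∑ m ∈ Icc 2 k, ((m:ℝ) * ((m:ℝ) - 1))⁻¹ := by
                apply Finset.sum_le_sum_of_subset_of_nonneg hsub
                intro m hm _
                have hm2 : (2:ℝ) ≤ (m:ℝ) := by exact_mod_cast (Finset.mem_Icc.mp hm).1
                have hx1 : (0:ℝ) < (m:ℝ) := by linarith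
                have hx2 : (0:ℝ) < (m:ℝ) - 1 := by linarith
                positivity
            _ = 1 - (k:ℝ)⁻¹ := telescope_sum k (by omega)
            _ ≤ 1 := by
                have : (0:ℝ) ≤ (k:ℝ)⁻¹ := by positivity
                linarith
        have hm2 := mertens2 hk
        have hlogk : 0 < Real.log k :=
          Real.log_pos (by exact_mod_cast (by omega : 1 < k))
        have hfinal : ∑ p ∈ Pfin k, ((p:ℝ) - 1)⁻¹ ≤ Real.log (Real.log k) + 7 := by
          rw [Finset.sum_add_distrib] at hsum
          linarith
        calc Real.exp (∑ p ∈ Pfin k, ((p:ℝ) - 1)⁻¹)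
            ≤ Real.exp (Real.log (Real.log k) + 7) := Real.exp_le_exp.mpr hfinal
          _ = Real.exp 7 * Real.log k := by
              rw [Real.exp_add, Real.exp_log hlogk]; ring


lemma geom_bound {r : ℝ} (h0 : 0 ≤ r) (h1 : r < 1) (E : ℕ) :
    ∑ e ∈ range E, r ^ e ≤ (1 - r)⁻¹ := by
  have h1r : 0 < 1 - r := by linarith
  have hg := geom_sum_mul r E
  have h2 : (∑ e ∈ range E, r ^ e) * (1 - r) = 1 - r ^ E := by nlinarith [hg]
  have h3 : (∑ e ∈ range E, r ^ e) * (1 - r) ≤ (1 - r)⁻¹ * (1 - r) := by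
    rw [h2, inv_mul_cancel₀ (ne_of_gt h1r)]
    have : 0 ≤ r ^ E := pow_nonneg h0 E
    linarith
  exact le_of_mul_le_mul_right h3 h1r

lemma eq_prod_pow_of_smooth {k a : ℕ} (ha : a ≠ 0) (hs : ∀ p ∈ a.primeFactors, p ≤ k) :
    a = ∏ p ∈ Pfin k, p ^ a.factorization p := by
  conv_lhs => rw [← Nat.factorization_prod_pow_eq_self ha]
  rw [Finsupp.prod, Nat.support_factorization]
  apply Finset.prod_subset
  · intro p hp
    exact mem_Pfin.mpr ⟨hs p hp, Nat.prime_of_mem_primeFactors hp⟩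
  · intro p _ hnp
    rw [← Nat.support_factorization] at hnp
    rw [Finsupp.notMem_support_iff.mp hnp, pow_zero]

lemma smoothsum {k : ℕ} (hk : 2 ≤ k) (T : ℕ) :
    ∑ a ∈ (Icc 1 T).filter (fun a => ∀ p ∈ a.primeFactors, p ≤ k), ((a:ℝ))⁻¹
      ≤ Real.exp 7 * Real.log k := by
  classical
  set P := Pfin k with hP
  set E := T + 1 with hE
  set S := (Icc 1 T).filter (fun a => ∀ p ∈ a.primeFactors, p ≤ k) with hS
  set G : (∀ p, p ∈ P → ℕ) → ℝ := fun f => ∏ x ∈ P.attach, ((x.1:ℝ)⁻¹) ^ (f x.1 x.2) with hG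
  have hGnonneg : ∀ f, 0 ≤ G f := by
    intro f; apply Finset.prod_nonneg; intro x _; positivity
  set φ : ℕ → (∀ p, p ∈ P → ℕ) := fun a p _ => a.factorization p with hφ
  have hφmem : ∀ a ∈ S, φ a ∈ P.pi (fun _ => range E) := by
    intro a haS
    rw [Finset.mem_pi]
    intro p hp
    rw [Finset.mem_range]
    have ha1 : 1 ≤ a := (Finset.mem_Icc.mp (Finset.mem_filter.mp haS).1).1
    have haT : a ≤ T := (Finset.mem_Icc.mp (Finset.mem_filter.mp haS).1).2
    calc a.factorization p < a := Nat.factorization_lt p (by omega)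
      _ < E := by omega
  have hval : ∀ a ∈ S, ((a:ℝ))⁻¹ = G (φ a) := by
    intro a haS
    obtain ⟨haI, hsm⟩ := Finset.mem_filter.mp haS
    have ha1 : 1 ≤ a := (Finset.mem_Icc.mp haI).1
    have haeq := eq_prod_pow_of_smooth (k := k) (by omega) hsm
    rw [hG]
    simp only [hφ]
    rw [Finset.prod_attach P (fun p => ((p:ℝ))⁻¹ ^ a.factorization p)]
    have h1 : ∏ p ∈ P, ((p:ℝ))⁻¹ ^ a.factorization p
        = (∏ p ∈ P, ((p:ℝ)) ^ a.factorization p)⁻¹ := by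
      rw [← Finset.prod_inv_distrib]
      apply Finset.prod_congr rfl
      intro p _
      rw [inv_pow]
    rw [h1]
    congr 1
    have : ((a:ℕ):ℝ) = ((∏ p ∈ Pfin k, p ^ a.factorization p : ℕ) : ℝ) := by
      exact_mod_cast congrArg (Nat.cast : ℕ → ℝ) haeq
    rw [this]
    push_cast
    rfl
  -- injectivity
  have hinj : Set.InjOn φ S := by
    intro a haS b hbS hab
    obtain ⟨haI, hsma⟩ := Finset.mem_filter.mp haS
    obtain ⟨hbI, hsmb⟩ := Finset.mem_filter.mp hbS
    have ha1 : 1 ≤ a := (Finset.mem_Icc.mp haI).1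
    have hb1 : 1 ≤ b := (Finset.mem_Icc.mp hbI).1
    rw [eq_prod_pow_of_smooth (k := k) (by omega : a ≠ 0) hsma,
        eq_prod_pow_of_smooth (k := k) (by omega : b ≠ 0) hsmb]
    apply Finset.prod_congr rfl
    intro p hp
    have := funext_iff.mp (funext_iff.mp hab p) hp
    simp only [hφ] at this
    rw [this]
  -- sum over S = sum over image
  have himg : ∑ a ∈ S, ((a:ℝ))⁻¹ = ∑ f ∈ S.image φ, G f := by
    rw [Finset.sum_image (fun a ha b hb h => hinj ha hb h)]
    exact Finset.sum_congr rfl hval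
  have hsub : S.image φ ⊆ P.pi (fun _ => range E) := by
    intro f hf
    obtain ⟨a, ha, rfl⟩ := Finset.mem_image.mp hf
    exact hφmem a ha
  calc ∑ a ∈ S, ((a:ℝ))⁻¹ = ∑ f ∈ S.image φ, G f := himg
    _ ≤ ∑ f ∈ P.pi (fun _ => range E), G f :=
        Finset.sum_le_sum_of_subset_of_nonneg hsub (fun f _ _ => hGnonneg f)
    _ = ∏ p ∈ P, ∑ e ∈ range E, ((p:ℝ))⁻¹ ^ e := by
        rw [Finset.prod_sum]
    _ ≤ ∏ p ∈ P, (1 - (p:ℝ)⁻¹)⁻¹ := by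
        apply Finset.prod_le_prod
        · intro p _
          apply Finset.sum_nonneg
          intro e _
          positivity
        · intro p hp
          have hp2 : (2:ℝ) ≤ (p:ℝ) := by exact_mod_cast (mem_Pfin.mp hp).2.two_le
          apply geom_bound (by positivity)
          rw [inv_lt_one_iff₀]
          right; linarith
    _ ≤ Real.exp 7 * Real.log k := eulerprod hk


def Rfin (k b : ℕ) : Finset ℕ := (Icc 1 b).filter (fun s => ∀ p ∈ s.primeFactors, k < p)

-- smooth and rough parts
def smP (k m : ℕ) : ℕ := ∏ p ∈ m.primeFactors.filter (· ≤ k), p ^ m.factorization p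
def roP (k m : ℕ) : ℕ := ∏ p ∈ m.primeFactors.filter (fun p => ¬ (p ≤ k)), p ^ m.factorization p

lemma smP_mul_roP {k m : ℕ} (hm : m ≠ 0) : smP k m * roP k m = m := by
  rw [smP, roP, Finset.prod_filter_mul_prod_filter_not]
  conv_rhs => rw [← Nat.factorization_prod_pow_eq_self hm]
  rw [Finsupp.prod, Nat.support_factorization]

lemma smP_pos (k m : ℕ) : 0 < smP k m := by
  apply Finset.prod_pos
  intro p hp
  exact pow_pos (Nat.prime_of_mem_primeFactors (Finset.mem_filter.mp hp).1).pos _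

lemma roP_pos (k m : ℕ) : 0 < roP k m := by
  apply Finset.prod_pos
  intro p hp
  exact pow_pos (Nat.prime_of_mem_primeFactors (Finset.mem_filter.mp hp).1).pos _

lemma prime_dvd_prod_pow {q : ℕ} (hq : q.Prime) {s : Finset ℕ} {e : ℕ → ℕ}
    (hs : ∀ p ∈ s, p.Prime) (h : q ∣ ∏ p ∈ s, p ^ e p) : ∃ p ∈ s, q = p := by
  have := (Prime.dvd_finset_prod_iff (hq.prime) (fun p => p ^ e p)).mp h
  obtain ⟨p, hp, hdvd⟩ := this
  exact ⟨p, hp, (Nat.prime_dvd_prime_iff_eq hq (hs p hp)).mp (hq.dvd_of_dvd_pow hdvd)⟩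

lemma smP_smooth {k m : ℕ} : ∀ q ∈ (smP k m).primeFactors, q ≤ k := by
  intro q hq
  have hqp := Nat.prime_of_mem_primeFactors hq
  have hdvd := Nat.dvd_of_mem_primeFactors hq
  obtain ⟨p, hp, rfl⟩ := prime_dvd_prod_pow hqp
    (fun p hp => Nat.prime_of_mem_primeFactors (Finset.mem_filter.mp hp).1) hdvd
  exact (Finset.mem_filter.mp hp).2

lemma roP_rough {k m : ℕ} : ∀ q ∈ (roP k m).primeFactors, k < q := by
  intro q hq
  have hqp := Nat.prime_of_mem_primeFactors hq
  have hdvd := Nat.dvd_of_mem_primeFactors hq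
  obtain ⟨p, hp, rfl⟩ := prime_dvd_prod_pow hqp
    (fun p hp => Nat.prime_of_mem_primeFactors (Finset.mem_filter.mp hp).1) hdvd
  exact Nat.not_le.mp (Finset.mem_filter.mp hp).2

lemma roughsum {k : ℕ} (hk : 2 ≤ k) {b : ℕ} (hb : 1 ≤ b) :
    Real.log (b+1) ≤ (Real.exp 7 * Real.log k) * ∑ s ∈ Rfin k b, ((s:ℝ))⁻¹ := by
  classical
  set SF := (Icc 1 b).filter (fun a => ∀ p ∈ a.primeFactors, p ≤ k) with hSF
  set RF := Rfin k b with hRF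
  set ψ : ℕ → ℕ × ℕ := fun m => (smP k m, roP k m) with hψ
  have hmem : ∀ m ∈ Icc 1 b, ψ m ∈ SF ×ˢ RF := by
    intro m hm
    have hm1 : 1 ≤ m := (Finset.mem_Icc.mp hm).1
    have hmb : m ≤ b := (Finset.mem_Icc.mp hm).2
    have hmul := smP_mul_roP (k := k) (show m ≠ 0 by omega)
    have hsle : smP k m ≤ m := Nat.le_of_dvd (by omega) ⟨roP k m, hmul.symm⟩
    have hrle : roP k m ≤ m := Nat.le_of_dvd (by omega) ⟨smP k m, by rw [mul_comm]; exact hmul.symm⟩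
    have g1 : smP k m ∈ SF :=
      Finset.mem_filter.mpr ⟨Finset.mem_Icc.mpr ⟨smP_pos k m, by omega⟩, smP_smooth⟩
    have g2 : roP k m ∈ RF :=
      Finset.mem_filter.mpr ⟨Finset.mem_Icc.mpr ⟨roP_pos k m, by omega⟩, roP_rough⟩
    exact Finset.mem_product.mpr ⟨g1, g2⟩
  have hinj : Set.InjOn ψ (Icc 1 b : Finset ℕ) := by
    intro m₁ h₁ m₂ h₂ h
    have hm₁ : (1:ℕ) ≤ m₁ := (Finset.mem_Icc.mp h₁).1
    have hm₂ : (1:ℕ) ≤ m₂ := (Finset.mem_Icc.mp h₂).1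
    have e1 : smP k m₁ = smP k m₂ := congrArg Prod.fst h
    have e2 : roP k m₁ = roP k m₂ := congrArg Prod.snd h
    rw [← smP_mul_roP (k := k) (show m₁ ≠ 0 by omega),
        ← smP_mul_roP (k := k) (show m₂ ≠ 0 by omega), e1, e2]
  have hval : ∀ m ∈ Icc 1 b, ((m:ℝ))⁻¹ = ((smP k m : ℝ))⁻¹ * ((roP k m : ℝ))⁻¹ := by
    intro m hm
    have hm1 : 1 ≤ m := (Finset.mem_Icc.mp hm).1
    rw [← mul_inv]
    congr 1
    rw [← Nat.cast_mul]
    exact_mod_cast (congrArg (Nat.cast : ℕ → ℝ) (smP_mul_roP (show m ≠ 0 by omega))).symm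
  have himg : ∑ m ∈ Icc 1 b, ((m:ℝ))⁻¹
      ≤ ∑ x ∈ SF ×ˢ RF, ((x.1:ℝ))⁻¹ * ((x.2:ℝ))⁻¹ := by
    calc ∑ m ∈ Icc 1 b, ((m:ℝ))⁻¹
        = ∑ m ∈ Icc 1 b, (((ψ m).1:ℝ))⁻¹ * (((ψ m).2:ℝ))⁻¹ := Finset.sum_congr rfl hval
      _ = ∑ x ∈ (Icc 1 b).image ψ, ((x.1:ℝ))⁻¹ * ((x.2:ℝ))⁻¹ := by
          rw [Finset.sum_image (fun a ha b hb h => hinj ha hb h)]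
      _ ≤ ∑ x ∈ SF ×ˢ RF, ((x.1:ℝ))⁻¹ * ((x.2:ℝ))⁻¹ := by
          apply Finset.sum_le_sum_of_subset_of_nonneg
          · intro x hx
            obtain ⟨m, hm, rfl⟩ := Finset.mem_image.mp hx
            exact hmem m hm
          · intro x _ _
            positivity
  have hprod : ∑ x ∈ SF ×ˢ RF, ((x.1:ℝ))⁻¹ * ((x.2:ℝ))⁻¹
      = (∑ a ∈ SF, ((a:ℝ))⁻¹) * (∑ s ∈ RF, ((s:ℝ))⁻¹) := by
    rw [Finset.sum_mul_sum]
    rw [Finset.sum_product]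
  have hRnonneg : 0 ≤ ∑ s ∈ RF, ((s:ℝ))⁻¹ := by
    apply Finset.sum_nonneg; intro s _; positivity
  calc Real.log (b+1) ≤ ∑ m ∈ Icc 1 b, ((m:ℝ))⁻¹ := harmonic_lower b
    _ ≤ (∑ a ∈ SF, ((a:ℝ))⁻¹) * (∑ s ∈ RF, ((s:ℝ))⁻¹) := by rw [← hprod]; exact himg
    _ ≤ (Real.exp 7 * Real.log k) * ∑ s ∈ RF, ((s:ℝ))⁻¹ :=
        mul_le_mul_of_nonneg_right (smoothsum hk b) hRnonneg


lemma pc_le_self (N : ℕ) : (Pfin N).card ≤ N := by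
  have h : Pfin N ⊆ Icc 1 N := by
    intro p hp
    rw [mem_Pfin] at hp
    exact Finset.mem_Icc.mpr ⟨hp.2.one_lt.le, hp.1⟩
  calc (Pfin N).card ≤ (Icc 1 N).card := Finset.card_le_card h
    _ = N := by rw [Nat.card_Icc]; omega

lemma pc_split {a c : ℕ} (hac : a ≤ c) :
    ((Pfin c).card : ℝ) ≤ ((Pfin a).card : ℝ) + (((Ioc a c).filter Nat.Prime).card : ℝ) := by
  have hsub : Pfin c ⊆ Pfin a ∪ (Ioc a c).filter Nat.Prime := by
    intro p hp
    rw [mem_Pfin] at hp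
    rcases le_or_gt p a with h | h
    · exact Finset.mem_union_left _ (mem_Pfin.mpr ⟨h, hp.2⟩)
    · exact Finset.mem_union_right _ (Finset.mem_filter.mpr
        ⟨Finset.mem_Ioc.mpr ⟨h, hp.1⟩, hp.2⟩)
  have := (Finset.card_le_card hsub).trans (Finset.card_union_le _ _)
  exact_mod_cast this


end IAPS

open IAPS Finset in
set_option maxHeartbeats 1000000 in
/-- There is a positive constant `η` such that for every integer `k ≥ 2` and every integer
`n ≥ η⁻¹ k log k`, the number of integers in `{1, …, n}` relatively prime to each of
`1, 2, …, k` is at least `η n / log k` (natural logarithm). -/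
theorem independent_ap_sieve_lemma :
    ∃ η : ℝ, 0 < η ∧
      ∀ k : ℕ, 2 ≤ k →
        ∀ n : ℕ, η⁻¹ * k * Real.log k ≤ (n : ℝ) →
          η * n / Real.log k ≤
            ({m : ℕ | m ∈ Finset.Icc 1 n ∧ ∀ j ∈ Finset.Icc 1 k, Nat.gcd m j = 1}.ncard : ℝ) := by
  classical
  refine ⟨(100000:ℝ)⁻¹, by norm_num, ?_⟩
  intro k hk n hn
  rw [show ((100000:ℝ)⁻¹)⁻¹ = (100000:ℝ) by norm_num] at hn
  have hk1 : (1:ℝ) < (k:ℝ) := by exact_mod_cast hk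
  have hlogk : 0 < Real.log k := Real.log_pos hk1
  have hlogk2 : Real.log 2 ≤ Real.log k :=
    Real.log_le_log (by norm_num) (by exact_mod_cast hk)
  have hnR : (100000:ℝ) * k * Real.log k ≤ (n:ℝ) := hn
  have h2c : (0.6931:ℝ) < Real.log 2 := by
    have := Real.log_two_gt_d9; norm_num at this ⊢; linarith
  have hklk : (2:ℝ) * 0.6931 ≤ (k:ℝ) * Real.log k := by
    apply mul_le_mul (by exact_mod_cast hk) (by linarith) (by norm_num)
      (by positivity)
  have hn_big : (138000:ℝ) ≤ (n:ℝ) := by nlinarith [hnR, hklk]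
  have hn64 : 64 ≤ n := by
    by_contra h
    push_neg at h
    have : (n:ℝ) < 64 := by exact_mod_cast h
    linarith
  have hkn : k ≤ n := by
    have h1 : (1:ℝ) * k ≤ (100000 * Real.log k) * k := by
      apply mul_le_mul_of_nonneg_right _ (by positivity)
      nlinarith [log2_pos, hlogk2]
    have : (k:ℝ) ≤ (n:ℝ) := by nlinarith [hnR]
    exact_mod_cast this
  have hlogn : 0 < Real.log n :=
    Real.log_pos (by exact_mod_cast (by omega : 1 < n))
  -- identify the set with a finset of rough numbers
  set Rset := (Icc 1 n).filter (fun m => ∀ p ∈ m.primeFactors, k < p) with hRset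
  have hset : {m : ℕ | m ∈ Finset.Icc 1 n ∧ ∀ j ∈ Finset.Icc 1 k, Nat.gcd m j = 1}
      = (Rset : Set ℕ) := by
    ext m
    simp only [Set.mem_setOf_eq, hRset, Finset.coe_filter, Finset.mem_Icc]
    constructor
    · rintro ⟨hmI, hgcd⟩
      refine ⟨hmI, ?_⟩
      intro p hp
      have hpp := Nat.prime_of_mem_primeFactors hp
      have hpd := Nat.dvd_of_mem_primeFactors hp
      by_contra hle
      push_neg at hle
      have h1 := hgcd p ⟨hpp.one_lt.le, hle⟩
      have : p ∣ Nat.gcd m p := Nat.dvd_gcd hpd dvd_rfl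
      rw [h1] at this
      exact hpp.one_lt.ne' (Nat.dvd_one.mp this)
    · rintro ⟨hmI, hrough⟩
      refine ⟨hmI, ?_⟩
      intro j hj
      by_contra hne
      obtain ⟨p, hpp, hpd⟩ := Nat.exists_prime_and_dvd hne
      have hpm : p ∣ m := hpd.trans (Nat.gcd_dvd_left m j)
      have hpj : p ∣ j := hpd.trans (Nat.gcd_dvd_right m j)
      have hj1 : 1 ≤ j := hj.1
      have hjk : j ≤ k := hj.2
      have hpk : p ≤ k := le_trans (Nat.le_of_dvd (by omega) hpj) hjk
      have hm1 : 1 ≤ m := hmI.1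
      have : p ∈ m.primeFactors :=
        Nat.mem_primeFactors.mpr ⟨hpp, hpm, by omega⟩
      exact absurd (hrough p this) (by omega)
  rw [hset, Set.ncard_coe_finset]
  -- now split into two cases
  by_cases hcase : (n:ℝ) ≤ (k:ℝ)^(100:ℕ)
  · -- primes branch
    have hlognk : Real.log n ≤ 100 * Real.log k := by
      calc Real.log n ≤ Real.log ((k:ℝ)^(100:ℕ)) :=
          Real.log_le_log (by positivity) hcase
        _ = 100 * Real.log k := by rw [Real.log_pow]; norm_num
    set PrIoc := (Ioc k n).filter Nat.Prime with hPrIoc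
    have hsubR : PrIoc ⊆ Rset := by
      intro p hp
      obtain ⟨hpI, hpp⟩ := Finset.mem_filter.mp hp
      obtain ⟨hkp, hpn⟩ := Finset.mem_Ioc.mp hpI
      refine Finset.mem_filter.mpr ⟨Finset.mem_Icc.mpr ⟨hpp.one_lt.le, hpn⟩, ?_⟩
      intro q hq
      have : q = p := by
        have := Nat.mem_primeFactors.mp hq
        exact ((Nat.prime_dvd_prime_iff_eq this.1 hpp).mp this.2.1)
      omega
    have hcard1 : (PrIoc.card : ℝ) ≤ (Rset.card : ℝ) := by
      exact_mod_cast Finset.card_le_card hsubR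
    have hsplit := pc_split hkn
    have hcheb := cheb_lower hn64
    have hpck : ((Pfin k).card : ℝ) ≤ (k:ℝ) := by exact_mod_cast pc_le_self k
    -- n/(200 log k) ≤ n/(2 log n)
    have hd1 : (n:ℝ)/(200 * Real.log k) ≤ (n:ℝ)/(2 * Real.log n) := by
      apply div_le_div_of_nonneg_left (by positivity) (by positivity)
      linarith
    have hkle : (k:ℝ) * (100000 * Real.log k) ≤ (n:ℝ) := by nlinarith [hnR]
    -- final arithmetic
    rw [div_le_iff₀ hlogk]
    have hA : (n:ℝ)/(200 * Real.log k) - (k:ℝ) ≤ (Rset.card : ℝ) := by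
      have : ((Pfin n).card : ℝ) - ((Pfin k).card : ℝ) ≤ (PrIoc.card : ℝ) := by
        simp only [hPrIoc]; linarith [hsplit]
      linarith [hcheb, hd1, hpck, hcard1]
    have h200 : ((n:ℝ)/(200 * Real.log k)) * Real.log k = (n:ℝ)/200 := by
      field_simp
    have hmulL := mul_le_mul_of_nonneg_right hA hlogk.le
    rw [sub_mul, h200] at hmulL
    have hkL : (k:ℝ) * Real.log k ≤ (n:ℝ)/100000 := by linarith [hnR]
    calc (100000:ℝ)⁻¹ * n ≤ (n:ℝ)/200 - (n:ℝ)/100000 := by nlinarith [hn_big]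
      _ ≤ (Rset.card:ℝ) * Real.log k := by linarith
  · -- large n branch
    push_neg at hcase
    have hn0 : (0:ℝ) < n := by linarith
    set x := (n:ℝ) ^ ((1:ℝ)/3) with hxdef
    have hx0 : 0 < x := Real.rpow_pos_of_pos hn0 _
    have hx3 : x ^ (3:ℕ) = (n:ℝ) := by
      rw [hxdef, ← Real.rpow_natCast ((n:ℝ) ^ ((1:ℝ)/3)) 3, ← Real.rpow_mul hn0.le]
      norm_num
    set b := Nat.floor x with hbdef
    have hbx : (b:ℝ) ≤ x := Nat.floor_le hx0.le
    have hxb1 : x < (b:ℝ) + 1 := Nat.lt_floor_add_one x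
    have hk2R : (2:ℝ) ≤ (k:ℝ) := by exact_mod_cast hk
    have hk33x : (k:ℝ)^(33:ℕ) < x := by
      have h99 : ((k:ℝ)^(33:ℕ))^(3:ℕ) ≤ (k:ℝ)^(100:ℕ) := by
        rw [← pow_mul]
        apply pow_le_pow_right₀ (by linarith) (by norm_num)
      have h2 : ((k:ℝ)^(33:ℕ))^(3:ℕ) < x ^ (3:ℕ) := by
        rw [hx3]; exact lt_of_le_of_lt h99 hcase
      exact lt_of_pow_lt_pow_left₀ 3 hx0.le h2
    have hbk33 : k^(33:ℕ) ≤ b := by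
      have h1 : ((k^(33:ℕ) : ℕ):ℝ) < (b:ℝ) + 1 := by push_cast; linarith
      have h2 : k^(33:ℕ) < b + 1 := by exact_mod_cast h1
      omega
    have h2_33 : (64:ℕ) ≤ 2^(33:ℕ) := by norm_num
    have hb64 : 64 ≤ b := by
      have : (2:ℕ)^(33:ℕ) ≤ k^(33:ℕ) := Nat.pow_le_pow_left hk 33
      omega
    have hbk : k ≤ b := by
      have : k ≤ k^(33:ℕ) := Nat.le_self_pow (by norm_num) k
      omega
    have hb1 : 1 ≤ b := by omega
    have hb3n : b^3 ≤ n := by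
      have h1 : ((b:ℝ))^(3:ℕ) ≤ x^(3:ℕ) := pow_le_pow_left₀ (by positivity) hbx 3
      rw [hx3] at h1
      exact_mod_cast h1
    have hbpos : 0 < b := hb1
    have hbbn : b*b ≤ n/b := by
      rw [Nat.le_div_iff_mul_le hbpos]
      calc b*b*b = b^3 := by ring
        _ ≤ n := hb3n
    set RF := Rfin k b with hRF
    have hsmem : ∀ s ∈ RF, 1 ≤ s ∧ s ≤ b ∧ (∀ p ∈ s.primeFactors, k < p) := by
      intro s hs
      obtain ⟨hsI, hr⟩ := Finset.mem_filter.mp hs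
      exact ⟨(Finset.mem_Icc.mp hsI).1, (Finset.mem_Icc.mp hsI).2, hr⟩
    have hdivb : ∀ s ∈ RF, b ≤ n / s ∧ 64 ≤ n / s := by
      intro s hs
      obtain ⟨hs1, hsb, _⟩ := hsmem s hs
      have h1 : n / b ≤ n / s := Nat.div_le_div_left hsb (by omega)
      have h2 : b ≤ n/s := by
        have : b ≤ b*b := Nat.le_mul_of_pos_left b hbpos
        omega
      exact ⟨h2, by omega⟩
    -- the sigma counting set
    set Q := RF.sigma (fun s => (Ioc b (n/s)).filter Nat.Prime) with hQ
    have hQR : Q.card ≤ Rset.card := by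
      apply Finset.card_le_card_of_injOn (fun y => y.1 * y.2)
      · intro y hy
        rw [Finset.mem_coe, Finset.mem_sigma] at hy
        obtain ⟨hy1, hy2⟩ := hy
        obtain ⟨hs1, hsb, hrough⟩ := hsmem y.1 hy1
        obtain ⟨hyI, hyp⟩ := Finset.mem_filter.mp hy2
        obtain ⟨hbq, hqn⟩ := Finset.mem_Ioc.mp hyI
        have hq2 : 2 ≤ y.2 := hyp.two_le
        show y.1 * y.2 ∈ Rset
        refine Finset.mem_filter.mpr ⟨Finset.mem_Icc.mpr ⟨?_, ?_⟩, ?_⟩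
        · exact le_trans hs1 (Nat.le_mul_of_pos_right _ (by omega))
        · rw [mul_comm]
          exact (Nat.le_div_iff_mul_le (by omega)).mp hqn
        · intro p hp
          rw [Nat.primeFactors_mul (by omega) (by omega), Finset.mem_union] at hp
          rcases hp with hp | hp
          · exact hrough p hp
          · rw [hyp.primeFactors, Finset.mem_singleton] at hp
            omega
      · intro y hy z hz hyz
        have hyz' : y.1 * y.2 = z.1 * z.2 := hyz
        rw [Finset.mem_coe, Finset.mem_sigma] at hy hz
        obtain ⟨hy1, hy2⟩ := hy
        obtain ⟨hz1, hz2⟩ := hz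
        obtain ⟨hys1, hysb, _⟩ := hsmem y.1 hy1
        obtain ⟨hzs1, hzsb, _⟩ := hsmem z.1 hz1
        obtain ⟨hyI, hyp⟩ := Finset.mem_filter.mp hy2
        obtain ⟨hzI, hzp⟩ := Finset.mem_filter.mp hz2
        have hby : b < y.2 := (Finset.mem_Ioc.mp hyI).1
        have hbz : b < z.2 := (Finset.mem_Ioc.mp hzI).1
        have heq2 : y.2 = z.2 := by
          have hdvd : y.2 ∣ z.1 * z.2 := by rw [← hyz']; exact Dvd.intro_left _ rfl
          rcases (Nat.Prime.dvd_mul hyp).mp hdvd with h | h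
          · exfalso
            have := Nat.le_of_dvd (by omega) h
            omega
          · exact (Nat.prime_dvd_prime_iff_eq hyp hzp).mp h
        have heq1 : y.1 = z.1 := by
          apply Nat.eq_of_mul_eq_mul_right (show 0 < y.2 by omega)
          rw [heq2]
          rw [heq2] at hyz'
          exact hyz'
        exact Sigma.ext heq1 (heq_of_eq heq2)
    -- counting via cheb
    have hterm : ∀ s ∈ RF, (n:ℝ)/(4 * s * Real.log n) ≤ ((Pfin (n/s)).card : ℝ) := by
      intro s hs
      obtain ⟨hs1, hsb, _⟩ := hsmem s hs
      obtain ⟨hbns, h64ns⟩ := hdivb s hs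
      have hsR : (1:ℝ) ≤ (s:ℝ) := by exact_mod_cast hs1
      have hcheb := cheb_lower h64ns
      have hns2 : 2*s ≤ n := by
        have e1 : 2*s ≤ 2*b := by omega
        have e2 : 2*b ≤ b*b := Nat.mul_le_mul_right b (by omega)
        have e3 : b*b ≤ b*b*b := Nat.le_mul_of_pos_right _ (by omega)
        have e4 : b*b*b = b^3 := by ring
        omega
      have hnum : (n:ℝ)/(2*(s:ℝ)) ≤ ((n/s : ℕ):ℝ) := by
        have hlt : n < (n/s + 1) * s := by
          calc n = s * (n/s) + n % s := (Nat.div_add_mod n s).symm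
            _ < s * (n/s) + s := Nat.add_lt_add_left (Nat.mod_lt n (by omega)) _
            _ = (n/s + 1) * s := by ring
        have hltR : (n:ℝ) < (((n/s:ℕ):ℝ) + 1) * s := by exact_mod_cast hlt
        have hinv : (n:ℝ)/s - 1 ≤ ((n/s:ℕ):ℝ) := by
          rw [sub_le_iff_le_add, div_le_iff₀ (by positivity : (0:ℝ) < (s:ℝ))]
          nlinarith [hltR]
        have h2sn : (1:ℝ) ≤ (n:ℝ)/(2*s) := by
          rw [le_div_iff₀ (by positivity), one_mul]
          exact_mod_cast hns2
        have : (n:ℝ)/(2*s) = (n:ℝ)/s - (n:ℝ)/(2*s) := by field_simp; ring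
        linarith
      have hlogle : Real.log ((n/s : ℕ):ℝ) ≤ Real.log n :=
        Real.log_le_log (by exact_mod_cast (by omega : 0 < n/s))
          (by exact_mod_cast Nat.div_le_self n s)
      have hlogpos : 0 < Real.log ((n/s : ℕ):ℝ) :=
        Real.log_pos (by exact_mod_cast (by omega : 1 < n/s))
      calc (n:ℝ)/(4 * s * Real.log n) = ((n:ℝ)/(2*s))/(2 * Real.log n) := by
            rw [div_div]; congr 1; ring
        _ ≤ (((n/s : ℕ):ℝ))/(2 * Real.log n) := by
            apply div_le_div_of_nonneg_right hnum (by positivity)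
        _ ≤ (((n/s : ℕ):ℝ))/(2 * Real.log ((n/s : ℕ):ℝ)) := by
            apply div_le_div_of_nonneg_left (by positivity) (by positivity)
            linarith
        _ ≤ ((Pfin (n/s)).card : ℝ) := hcheb
    -- pc splitting
    have hsplit2 : ∀ s ∈ RF, ((Pfin (n/s)).card : ℝ)
        ≤ ((Pfin b).card : ℝ) + ((((Ioc b (n/s)).filter Nat.Prime)).card : ℝ) := by
      intro s hs
      exact pc_split (hdivb s hs).1
    have hcardQ : (Q.card : ℝ) = ∑ s ∈ RF, ((((Ioc b (n/s)).filter Nat.Prime)).card : ℝ) := by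
      rw [hQ, Finset.card_sigma]
      push_cast
      rfl
    have hsum1 : ∑ s ∈ RF, (n:ℝ)/(4 * s * Real.log n)
        ≤ ((RF.card : ℝ)) * ((Pfin b).card : ℝ) + (Q.card : ℝ) := by
      rw [hcardQ]
      calc ∑ s ∈ RF, (n:ℝ)/(4 * s * Real.log n)
          ≤ ∑ s ∈ RF, ((Pfin (n/s)).card : ℝ) := Finset.sum_le_sum hterm
        _ ≤ ∑ s ∈ RF, (((Pfin b).card : ℝ) + ((((Ioc b (n/s)).filter Nat.Prime)).card : ℝ)) :=
            Finset.sum_le_sum hsplit2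
        _ = ((RF.card : ℝ)) * ((Pfin b).card : ℝ)
            + ∑ s ∈ RF, ((((Ioc b (n/s)).filter Nat.Prime)).card : ℝ) := by
            rw [Finset.sum_add_distrib, Finset.sum_const, nsmul_eq_mul]
    -- lower bound for the main sum
    obtain ⟨E7, hE7⟩ : ∃ E7 : ℝ, E7 = Real.exp 7 := ⟨_, rfl⟩
    have hE7pos : 0 < E7 := hE7 ▸ Real.exp_pos 7
    have hE7le : E7 ≤ 1097 := by
      have h1 : Real.exp 7 = (Real.exp 1)^(7:ℕ) := by
        rw [← Real.exp_nat_mul]; norm_num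
      have h2 : Real.exp 1 ≤ 2.7182818286 := (Real.exp_one_lt_d9).le
      rw [hE7, h1]
      calc (Real.exp 1)^(7:ℕ) ≤ (2.7182818286:ℝ)^(7:ℕ) := by
            apply pow_le_pow_left₀ (Real.exp_pos 1).le h2
        _ ≤ 1097 := by norm_num
    have hrs := roughsum (k := k) hk hb1
    rw [← hE7] at hrs
    have hlogb1 : Real.log n / 3 ≤ Real.log ((b:ℝ)+1) := by
      have h1 : Real.log x = (1/3) * Real.log n := Real.log_rpow hn0 _
      have h2 : Real.log x ≤ Real.log ((b:ℝ)+1) := Real.log_le_log hx0 hxb1.le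
      linarith
    have hSpos : 0 < E7 * Real.log k := mul_pos hE7pos hlogk
    have hSges : Real.log n / (3 * (E7 * Real.log k)) ≤ ∑ s ∈ RF, ((s:ℝ))⁻¹ := by
      rw [div_le_iff₀ (mul_pos (by norm_num) hSpos)]
      have := le_trans hlogb1 hrs
      nlinarith [this]
    have hmain : (n:ℝ)/(12 * E7 * Real.log k) ≤ ∑ s ∈ RF, (n:ℝ)/(4 * s * Real.log n) := by
      have heq : ∑ s ∈ RF, (n:ℝ)/(4 * s * Real.log n)
          = ((n:ℝ)/(4 * Real.log n)) * ∑ s ∈ RF, ((s:ℝ))⁻¹ := by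
        rw [Finset.mul_sum]
        apply Finset.sum_congr rfl
        intro s hs
        have hs1 : (1:ℝ) ≤ (s:ℝ) := by exact_mod_cast (hsmem s hs).1
        rw [mul_comm ((n:ℝ)/(4 * Real.log n)) _, inv_mul_eq_div, div_div]
        congr 1
        ring
      rw [heq]
      have h1 : ((n:ℝ)/(4 * Real.log n)) * (Real.log n / (3 * (E7 * Real.log k)))
          ≤ ((n:ℝ)/(4 * Real.log n)) * ∑ s ∈ RF, ((s:ℝ))⁻¹ := by
        apply mul_le_mul_of_nonneg_left hSges (by positivity)
      have h2 : ((n:ℝ)/(4 * Real.log n)) * (Real.log n / (3 * (E7 * Real.log k)))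
          = (n:ℝ)/(12 * E7 * Real.log k) := by
        rw [div_mul_div_comm]
        have h12 : (0:ℝ) < 12 * E7 * Real.log k :=
          mul_pos (mul_pos (by norm_num : (0:ℝ) < 12) hE7pos) hlogk
        rw [div_eq_div_iff (by positivity) h12.ne']
        ring
      linarith
    -- bound the subtracted term
    have hcardRF : (RF.card : ℝ) ≤ (b:ℝ) := by
      have : RF.card ≤ (Icc 1 b).card := Finset.card_le_card (Finset.filter_subset _ _)
      have h2 : (Icc 1 b).card = b := by rw [Nat.card_Icc]; omega
      exact_mod_cast this.trans_eq h2
    have hpcb : ((Pfin b).card : ℝ) ≤ (b:ℝ) := by exact_mod_cast pc_le_self b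
    have hbb : (RF.card : ℝ) * ((Pfin b).card : ℝ) ≤ (b:ℝ) * (b:ℝ) := by
      apply mul_le_mul hcardRF hpcb (by positivity) (by positivity)
    have hlogkk : Real.log k ≤ (k:ℝ) := Real.log_le_self (by positivity)
    have hx2 : (b:ℝ) * (b:ℝ) ≤ (n:ℝ) / x := by
      have h1 : (b:ℝ)*(b:ℝ) ≤ x * x := by nlinarith [hbx, hx0]
      have h2 : x * x = (n:ℝ)/x := by
        rw [eq_div_iff (ne_of_gt hx0)]
        rw [← hx3]; ring
      linarith
    have hxbig : 24 * E7 * Real.log k ≤ x := by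
      have h1 : 24 * E7 * Real.log k ≤ 24 * 1097 * (k:ℝ) := by
        have := mul_le_mul hE7le hlogkk (by positivity) (by norm_num : (0:ℝ) ≤ 1097)
        nlinarith [hlogk, hE7pos]
      have h2 : (24 * 1097:ℝ) * k ≤ (k:ℝ)^(33:ℕ) := by
        have h3 : ((2:ℝ))^(32:ℕ) ≤ (k:ℝ)^(32:ℕ) := pow_le_pow_left₀ (by norm_num) hk2R 32
        have h4 : (k:ℝ)^(33:ℕ) = (k:ℝ)^(32:ℕ) * k := by ring
        have h5 : (24 * 1097:ℝ) ≤ 2^(32:ℕ) := by norm_num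
        rw [h4]
        have : (24 * 1097:ℝ) * k ≤ 2^(32:ℕ) * k := by
          apply mul_le_mul_of_nonneg_right h5 (by positivity)
        nlinarith [h3, hk2R]
      linarith [hk33x]
    have h24pos : (0:ℝ) < 24 * E7 * Real.log k :=
      mul_pos (mul_pos (by norm_num : (0:ℝ) < 24) hE7pos) hlogk
    have hsub : (b:ℝ) * (b:ℝ) ≤ (n:ℝ)/(24 * E7 * Real.log k) := by
      have h1 : (n:ℝ)/x ≤ (n:ℝ)/(24 * E7 * Real.log k) :=
        div_le_div_of_nonneg_left hn0.le h24pos hxbig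
      linarith
    -- final assembly
    have hQcard : (n:ℝ)/(12 * E7 * Real.log k) - (n:ℝ)/(24 * E7 * Real.log k) ≤ (Q.card : ℝ) := by
      linarith [hmain, hsum1, hbb, hsub]
    have hhalf : (n:ℝ)/(12 * E7 * Real.log k) - (n:ℝ)/(24 * E7 * Real.log k)
        = (n:ℝ)/(24 * E7 * Real.log k) := by
      have h12 : (0:ℝ) < 12 * E7 * Real.log k :=
        mul_pos (mul_pos (by norm_num : (0:ℝ) < 12) hE7pos) hlogk
      have h24 : (0:ℝ) < 24 * E7 * Real.log k := h24pos
      rw [div_sub_div _ _ h12.ne' h24.ne',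
        div_eq_div_iff (mul_ne_zero h12.ne' h24.ne') h24.ne']
      ring
    have hfin : (n:ℝ)/(24 * E7 * Real.log k) ≤ (Rset.card : ℝ) := by
      have := hQcard
      rw [hhalf] at this
      have h2 : (Q.card : ℝ) ≤ (Rset.card : ℝ) := by exact_mod_cast hQR
      linarith
    have hlast : (100000:ℝ)⁻¹ * n / Real.log k ≤ (n:ℝ)/(24 * E7 * Real.log k) := by
      rw [show (100000:ℝ)⁻¹ * n / Real.log k = (n:ℝ)/(100000 * Real.log k) by
        field_simp]
      apply div_le_div_of_nonneg_left (by positivity) h24pos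
      have h1 : (24:ℝ) * E7 ≤ 100000 := by linarith only [hE7le]
      exact mul_le_mul_of_nonneg_right h1 hlogk.le
    exact hlast.trans hfin
end

section
/- Let s be a positive integer and suppose 0 ≤ x₁ ≤ x₂ ≤ … ≤ x_s are real numbers, and 0 ≤ yᵢ ≤ xᵢ for each 1 ≤ i ≤ s. If α := Σ_{i=1}^s (xᵢ − yᵢ), then ∏_{i=1}^s yᵢ ≥ (x₁ − α)·∏_{i=2}^s xᵢ. -/
/-- If `0 ≤ x₁ ≤ … ≤ x_s`, `0 ≤ yᵢ ≤ xᵢ` for each `i`, and `α = Σᵢ (xᵢ - yᵢ)`, then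
`∏ᵢ yᵢ ≥ (x₁ - α) ∏_{i=2}^s xᵢ`. -/
theorem product_decrease (s : ℕ) (hs : 1 ≤ s) (x y : ℕ → ℝ)
    (hx0 : 0 ≤ x 1)
    (hmono : ∀ i ∈ Finset.Icc 1 s, ∀ j ∈ Finset.Icc 1 s, i ≤ j → x i ≤ x j)
    (hy0 : ∀ i ∈ Finset.Icc 1 s, 0 ≤ y i)
    (hyx : ∀ i ∈ Finset.Icc 1 s, y i ≤ x i) :
    (x 1 - ∑ i ∈ Finset.Icc 1 s, (x i - y i)) * ∏ i ∈ Finset.Icc 2 s, x i ≤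
      ∏ i ∈ Finset.Icc 1 s, y i := by
  induction s, hs using Nat.le_induction with
  | base =>
    simp [Finset.Icc_self, show Finset.Icc 2 1 = ∅ by decide]
  | succ n hn ih =>
    have hsub : ∀ i ∈ Finset.Icc 1 n, i ∈ Finset.Icc 1 (n + 1) := by
      intro i hi; simp only [Finset.mem_Icc] at *; omega
    have ih'' := ih (fun i hi j hj hij => hmono i (hsub i hi) j (hsub j hj) hij)
      (fun i hi => hy0 i (hsub i hi)) (fun i hi => hyx i (hsub i hi))
    have h1 : (1:ℕ) ≤ n + 1 := by omega
    have h2 : (2:ℕ) ≤ n + 1 := by omega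
    rw [Finset.prod_Icc_succ_top h1, Finset.sum_Icc_succ_top h1,
      Finset.prod_Icc_succ_top h2]
    set A := ∑ i ∈ Finset.Icc 1 n, (x i - y i) with hA
    set Q := ∏ i ∈ Finset.Icc 2 n, x i with hQ
    set P := ∏ i ∈ Finset.Icc 1 n, y i with hP
    have hmem : n + 1 ∈ Finset.Icc 1 (n + 1) := by simp only [Finset.mem_Icc]; omega
    have hmem1 : (1:ℕ) ∈ Finset.Icc 1 (n + 1) := by simp only [Finset.mem_Icc]; omega
    have hxn : x 1 ≤ x (n + 1) := hmono 1 hmem1 (n + 1) hmem (by omega)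
    have hyn0 : 0 ≤ y (n + 1) := hy0 _ hmem
    have hyxn : y (n + 1) ≤ x (n + 1) := hyx _ hmem
    have hA0 : 0 ≤ A := Finset.sum_nonneg fun i hi => by
      have := hyx i (hsub i hi); linarith
    have hQ0 : 0 ≤ Q := Finset.prod_nonneg fun i hi => by
      have hi' : i ∈ Finset.Icc 1 (n + 1) := by
        simp only [Finset.mem_Icc] at *; omega
      exact le_trans hx0 (hmono 1 hmem1 i hi' (by simp only [Finset.mem_Icc] at hi; omega))
    have hP0 : 0 ≤ P := Finset.prod_nonneg fun i hi => hy0 i (hsub i hi)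
    rcases le_or_gt (x 1 - A) 0 with hc | hc
    · have hlhs : (x 1 - (A + (x (n+1) - y (n+1)))) * (Q * x (n+1)) ≤ 0 := by
        apply mul_nonpos_of_nonpos_of_nonneg
        · linarith
        · exact mul_nonneg hQ0 (le_trans hx0 hxn)
      have : 0 ≤ P * y (n+1) := mul_nonneg hP0 hyn0
      linarith
    · have step1 : (x 1 - (A + (x (n+1) - y (n+1)))) * (Q * x (n+1)) ≤
          (x 1 - A) * Q * y (n+1) := by
        nlinarith [mul_nonneg hQ0 (sub_nonneg.2 hyxn), mul_nonneg hA0 hQ0]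
      have step2 : (x 1 - A) * Q * y (n+1) ≤ P * y (n+1) :=
        mul_le_mul_of_nonneg_right ih'' hyn0
      linarith
end

section
/- Let r ≥ 2 be an integer and suppose 0 ≤ a₁ ≤ a₂ ≤ … ≤ a_r ≤ 1 are real numbers with Σ_{i=1}^r aᵢ ≥ r − 1. Then ∏_{i=2}^r aᵢ ≥ ((r−1)/r)^{r−1}, with equality if and only if aᵢ = (r−1)/r for every i. -/
open Real Finset

/-- Monotonicity of `(1 + 1/u)^u` (strict version), via Bernoulli. -/
private lemma aux_mono {u v : ℝ} (hu : 0 < u) (huv : u < v) :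
    (1 + 1/u) ^ u < (1 + 1/v) ^ v := by
  have hv : 0 < v := hu.trans huv
  have hp : 1 < v / u := (one_lt_div hu).2 huv
  have hB : 1 + (v/u) * (1/v) < (1 + 1/v) ^ (v/u) :=
    one_add_mul_self_lt_rpow_one_add (by linarith [(one_div_pos.2 hv).le]) (one_div_pos.2 hv).ne' hp
  have h1 : 1 + (v/u) * (1/v) = 1 + 1/u := by field_simp
  rw [h1] at hB
  have hbase : (0:ℝ) ≤ 1 + 1/u := by positivity
  have := Real.rpow_lt_rpow hbase hB hu
  rwa [← Real.rpow_mul (by positivity), div_mul_cancel₀ _ hu.ne'] at this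

/-- Chord inequality for `x ↦ (1-t)^(x/t)` versus `1 - x` on `[0, t]`. -/
private lemma aux_chord {b t : ℝ} (hb : 0 ≤ b) (hbt : b ≤ t) (ht1 : t < 1) :
    (1 - t) ^ (b / t) ≤ 1 - b := by
  rcases eq_or_lt_of_le hb with hb0 | hb0
  · simp [← hb0]
  · have ht0 : 0 < t := hb0.trans_le hbt
    have hp : 1 ≤ t / b := (one_le_div hb0).2 hbt
    have hB : 1 + (t/b) * (-b) ≤ (1 + (-b)) ^ (t/b) :=
      one_add_mul_self_le_rpow_one_add (by nlinarith) hp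
    have h1 : 1 + (t/b) * (-b) = 1 - t := by field_simp; ring
    rw [h1] at hB
    have h2 : (0:ℝ) ≤ 1 - t := by linarith
    have := Real.rpow_le_rpow h2 hB (by positivity : (0:ℝ) ≤ b / t)
    rwa [← Real.rpow_mul (by nlinarith : (0:ℝ) ≤ 1 + (-b)),
      div_mul_div_comm, mul_comm t b, div_self (by positivity), Real.rpow_one,
      show 1 + (-b) = 1 - b by ring] at this

/-- If `0 ≤ a₁ ≤ … ≤ a_r ≤ 1` with `Σᵢ aᵢ ≥ r - 1`, then
`∏_{i=2}^r aᵢ ≥ ((r-1)/r)^(r-1)`, with equality iff every `aᵢ = (r-1)/r`. -/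
theorem product_lower_bound (r : ℕ) (hr : 2 ≤ r) (a : ℕ → ℝ)
    (h0 : 0 ≤ a 1) (h1 : a r ≤ 1)
    (hmono : ∀ i ∈ Finset.Icc 1 r, ∀ j ∈ Finset.Icc 1 r, i ≤ j → a i ≤ a j)
    (hsum : (r : ℝ) - 1 ≤ ∑ i ∈ Finset.Icc 1 r, a i) :
    (((r : ℝ) - 1) / r) ^ (r - 1) ≤ ∏ i ∈ Finset.Icc 2 r, a i ∧
      (∏ i ∈ Finset.Icc 2 r, a i = (((r : ℝ) - 1) / r) ^ (r - 1) ↔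
        ∀ i ∈ Finset.Icc 1 r, a i = ((r : ℝ) - 1) / r) := by
  have hr2 : (2:ℝ) ≤ (r:ℝ) := by exact_mod_cast hr
  have hrpos : (0:ℝ) < r := by linarith
  set c : ℝ := ((r : ℝ) - 1) / r with hc
  have hc0 : 0 < c := div_pos (by linarith) hrpos
  have hc1 : c < 1 := (div_lt_one hrpos).2 (by linarith)
  have hcard : (Finset.Icc 2 r).card = r - 1 := by rw [Nat.card_Icc]; omega
  have h1mem : (1:ℕ) ∈ Finset.Icc 1 r := by simp [Finset.mem_Icc]; omega
  have hrmem : r ∈ Finset.Icc 1 r := by simp [Finset.mem_Icc]; omega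
  have hrmem2 : r ∈ Finset.Icc 2 r := by simp [Finset.mem_Icc]; omega
  have hsub : Finset.Icc 2 r ⊆ Finset.Icc 1 r := by
    intro i hi; simp only [Finset.mem_Icc] at *; omega
  have hins : Finset.Icc 1 r = insert 1 (Finset.Icc 2 r) := by
    ext i; simp only [Finset.mem_Icc, Finset.mem_insert]; omega
  have h1ni : (1:ℕ) ∉ Finset.Icc 2 r := by simp
  have hsum' : (r:ℝ) - 1 ≤ a 1 + ∑ i ∈ Finset.Icc 2 r, a i := by
    rwa [hins, Finset.sum_insert h1ni] at hsum
  have hle1 : ∀ i ∈ Finset.Icc 1 r, a i ≤ 1 := by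
    intro i hi
    refine (hmono i hi r hrmem ?_).trans h1
    simp only [Finset.mem_Icc] at hi; omega
  have hge : ∀ i ∈ Finset.Icc 1 r, a 1 ≤ a i := by
    intro i hi
    refine hmono 1 h1mem i hi ?_
    simp only [Finset.mem_Icc] at hi; omega
  have hcastsub : ((r - 1 : ℕ) : ℝ) = (r:ℝ) - 1 := by
    have h1r : 1 ≤ r := by omega
    push_cast [Nat.cast_sub h1r]; ring
  -- Case 2: a 1 < c gives a strict inequality
  have hcase2 : a 1 < c → c ^ (r - 1) < ∏ i ∈ Finset.Icc 2 r, a i := by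
    intro ha1c
    rcases eq_or_lt_of_le h0 with h0' | h0'
    · -- a 1 = 0 : all the other a i must equal 1
      have hsum1 : (r:ℝ) - 1 ≤ ∑ i ∈ Finset.Icc 2 r, a i := by
        rw [← h0'] at hsum'; linarith
      have hnn : ∀ i ∈ Finset.Icc 2 r, 0 ≤ 1 - a i :=
        fun i hi => by linarith [hle1 i (hsub hi)]
      have hzero : ∑ i ∈ Finset.Icc 2 r, (1 - a i) = 0 := by
        have hle : ∑ i ∈ Finset.Icc 2 r, (1 - a i) ≤ 0 := by
          rw [Finset.sum_sub_distrib, Finset.sum_const, hcard]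
          simp only [nsmul_eq_mul, mul_one]
          rw [hcastsub]; linarith
        exact le_antisymm hle (Finset.sum_nonneg hnn)
      have hall : ∀ i ∈ Finset.Icc 2 r, a i = 1 := by
        intro i hi
        have := (Finset.sum_eq_zero_iff_of_nonneg hnn).1 hzero i hi
        linarith
      rw [Finset.prod_congr rfl hall, Finset.prod_const_one]
      exact pow_lt_one₀ hc0.le hc1 (by omega)
    · -- 0 < a 1
      set t : ℝ := 1 - a 1 with htdef
      have ha11 : a 1 < 1 := lt_trans ha1c hc1
      have ht0 : 0 < t := by rw [htdef]; linarith
      have ht1 : t < 1 := by rw [htdef]; linarith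
      have htr : 1 < (r:ℝ) * t := by
        have h' : a 1 * r < (r:ℝ) - 1 := (lt_div_iff₀ hrpos).1 ha1c
        rw [htdef]; nlinarith
      set S : ℝ := ∑ i ∈ Finset.Icc 2 r, (1 - a i) with hSdef
      have hS0 : 0 ≤ S :=
        Finset.sum_nonneg fun i hi => by linarith [hle1 i (hsub hi)]
      have hSa : S ≤ a 1 := by
        rw [hSdef, Finset.sum_sub_distrib, Finset.sum_const, hcard]
        simp only [nsmul_eq_mul, mul_one]
        rw [hcastsub]; linarith
      have step1 : ∀ i ∈ Finset.Icc 2 r, (a 1) ^ ((1 - a i) / t) ≤ a i := by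
        intro i hi
        have hb0 : 0 ≤ 1 - a i := by linarith [hle1 i (hsub hi)]
        have hbt : 1 - a i ≤ t := by rw [htdef]; linarith [hge i (hsub hi)]
        have := aux_chord hb0 hbt ht1
        rw [show (1:ℝ) - t = a 1 by rw [htdef]; ring,
          sub_sub_cancel] at this
        exact this
      have step2 : (a 1) ^ (S / t) ≤ ∏ i ∈ Finset.Icc 2 r, a i := by
        have hprodeq : (a 1) ^ (S / t)
            = ∏ i ∈ Finset.Icc 2 r, (a 1) ^ ((1 - a i) / t) := by
          rw [hSdef, Finset.sum_div]
          exact Real.rpow_sum_of_pos h0' _ _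
        rw [hprodeq]
        exact Finset.prod_le_prod
          (fun i _ => (Real.rpow_pos_of_pos h0' _).le) step1
      have step3 : (a 1) ^ (a 1 / t) ≤ (a 1) ^ (S / t) :=
        Real.rpow_le_rpow_of_exponent_ge h0' ha11.le
          ((div_le_div_iff_of_pos_right ht0).2 hSa)
      have step4 : c ^ ((r:ℝ) - 1) < (a 1) ^ (a 1 / t) := by
        set u : ℝ := a 1 / t with hudef
        have hu0 : 0 < u := div_pos h0' ht0
        have huv : u < (r:ℝ) - 1 := by
          rw [hudef, div_lt_iff₀ ht0, htdef]; nlinarith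
        have e1 : 1 + 1/u = (a 1)⁻¹ := by
          rw [hudef, one_div_div]
          rw [htdef]; field_simp; ring
        have e2 : 1 + 1/((r:ℝ) - 1) = c⁻¹ := by
          have hr1 : (r:ℝ) - 1 ≠ 0 := by linarith
          rw [hc]
          field_simp
          ring
        have := aux_mono hu0 huv
        rw [e1, e2, Real.inv_rpow h0, Real.inv_rpow hc0.le] at this
        have h4 := (inv_lt_inv₀ (Real.rpow_pos_of_pos h0' u)
          (Real.rpow_pos_of_pos hc0 _)).1 this
        exact h4
      have step5 : c ^ (r - 1) = c ^ ((r:ℝ) - 1) := by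
        rw [← hcastsub, Real.rpow_natCast]
      calc c ^ (r - 1) = c ^ ((r:ℝ) - 1) := step5
        _ < (a 1) ^ (a 1 / t) := step4
        _ ≤ (a 1) ^ (S / t) := step3
        _ ≤ ∏ i ∈ Finset.Icc 2 r, a i := step2
  -- Case 1: c ≤ a 1 gives the bound (with strictness info for equality case)
  have hconst : ∏ _i ∈ Finset.Icc 2 r, c = c ^ (r - 1) := by
    rw [Finset.prod_const, hcard]
  have hcase1 : c ≤ a 1 → c ^ (r - 1) ≤ ∏ i ∈ Finset.Icc 2 r, a i := by
    intro hca
    rw [← hconst]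
    exact Finset.prod_le_prod (fun i _ => hc0.le)
      (fun i hi => hca.trans (hge i (hsub hi)))
  constructor
  · rcases le_or_gt c (a 1) with h | h
    · exact hcase1 h
    · exact (hcase2 h).le
  · constructor
    · intro heq
      have hca : c ≤ a 1 := by
        by_contra h
        exact absurd heq (hcase2 (lt_of_not_ge h)).ne'
      intro i hi
      refine le_antisymm ?_ (hca.trans (hge i hi))
      by_contra h
      push_neg at h
      have hcr : c < a r := lt_of_lt_of_le h (hmono i hi r hrmem (by
        simp only [Finset.mem_Icc] at hi; omega))
      have : ∏ _i ∈ Finset.Icc 2 r, c < ∏ i ∈ Finset.Icc 2 r, a i :=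
        Finset.prod_lt_prod (fun j _ => hc0)
          (fun j hj => hca.trans (hge j (hsub hj))) ⟨r, hrmem2, hcr⟩
      rw [hconst] at this
      exact absurd heq this.ne'
    · intro hall
      rw [Finset.prod_congr rfl (fun i hi => hall i (hsub hi)), hconst]
end

section
/- Let r ≥ 2 be an integer, suppose 0 ≤ a₁ ≤ a₂ ≤ … ≤ a_r ≤ 1 are real numbers with Σ_{i=1}^r aᵢ ≥ r − 1, and suppose 0 ≤ bᵢ ≤ aᵢ for each 1 ≤ i ≤ r, with α := Σ_{i=1}^r (aᵢ − bᵢ) ≤ 1/4. Then ∏_{i=2}^r bᵢ ≥ (1 − 2α)·((r−1)/r)^{r−1}. -/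
open Finset Real Set

-- Weierstrass product inequality
lemma weier (s : Finset ℕ) (x : ℕ → ℝ) (h0 : ∀ i ∈ s, 0 ≤ x i) (h1 : ∀ i ∈ s, x i ≤ 1) :
    1 - ∑ i ∈ s, x i ≤ ∏ i ∈ s, (1 - x i) := by
  classical
  induction s using Finset.induction_on with
  | empty => simp
  | insert _ _ hni ih =>
    rename_i j s'
    rw [Finset.sum_insert hni, Finset.prod_insert hni]
    have hx0 : 0 ≤ x j := h0 j (Finset.mem_insert_self _ _)
    have hx1 : x j ≤ 1 := h1 j (Finset.mem_insert_self _ _)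
    have hS : 0 ≤ ∑ i ∈ s', x i :=
      Finset.sum_nonneg fun i hi => h0 i (Finset.mem_insert_of_mem hi)
    have hih : 1 - ∑ i ∈ s', x i ≤ ∏ i ∈ s', (1 - x i) :=
      ih (fun i hi => h0 i (Finset.mem_insert_of_mem hi))
        (fun i hi => h1 i (Finset.mem_insert_of_mem hi))
    nlinarith [mul_le_mul_of_nonneg_left hih (by linarith : (0:ℝ) ≤ 1 - x j)]

-- chord inequality for log(1-x)
lemma log_chord {c t : ℝ} (hc : 0 ≤ c) (hct : c ≤ t) (ht1 : t < 1) (ht0 : 0 < t) :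
    (c / t) * Real.log (1 - t) ≤ Real.log (1 - c) := by
  have ha : (0:ℝ) ≤ 1 - c / t := by
    rw [sub_nonneg]; exact div_le_one_of_le₀ hct ht0.le
  have hb : (0:ℝ) ≤ c / t := by positivity
  have hab : (1 - c / t) + c / t = 1 := by ring
  have h := strictConcaveOn_log_Ioi.concaveOn.2 (Set.mem_Ioi.2 one_pos)
    (Set.mem_Ioi.2 (by linarith : (0:ℝ) < 1 - t)) ha hb hab
  have hx : (1 - c / t) • (1:ℝ) + (c / t) • (1 - t) = 1 - c := by
    simp only [smul_eq_mul, mul_one]; rw [mul_sub, mul_one, div_mul_cancel₀ c ht0.ne']; ring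
  rw [hx] at h
  simpa [Real.log_one] using h

lemma g_hasDeriv {x : ℝ} (hx : x ∈ Set.Ioo (0:ℝ) 1) :
    HasDerivAt (fun x : ℝ => (1 - x) * Real.log (1 - x) / x)
      ((-Real.log (1 - x) - x) / x ^ 2) x := by
  have hx0 : x ≠ 0 := ne_of_gt hx.1
  have h1x : (0:ℝ) < 1 - x := by linarith [hx.2]
  have hlog : HasDerivAt (fun x : ℝ => Real.log (1 - x)) (-(1 - x)⁻¹) x := by
    have := (Real.hasDerivAt_log (ne_of_gt h1x)).comp x ((hasDerivAt_id x).const_sub 1)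
    simp at this
    exact this
  have hnum : HasDerivAt (fun x : ℝ => (1 - x) * Real.log (1 - x))
      (-Real.log (1 - x) - 1) x := by
    have h := (((hasDerivAt_id x).const_sub 1).mul hlog)
    refine h.congr_deriv ?_
    show -1 * Real.log (1 - x) + (1 - x) * -(1 - x)⁻¹ = _
    rw [mul_neg, mul_inv_cancel₀ h1x.ne']; ring
  have h := hnum.div (hasDerivAt_id x) hx0
  refine h.congr_deriv ?_
  show ((-Real.log (1 - x) - 1) * x - (1 - x) * Real.log (1 - x) * 1) / x ^ 2 = _
  ring

lemma g_mono : MonotoneOn (fun x : ℝ => (1 - x) * Real.log (1 - x) / x) (Set.Ioo (0:ℝ) 1) := by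
  apply monotoneOn_of_deriv_nonneg (convex_Ioo 0 1)
  · exact fun x hx => ((g_hasDeriv hx).continuousAt.continuousWithinAt)
  · rw [interior_Ioo]
    exact fun x hx => ((g_hasDeriv hx).differentiableAt.differentiableWithinAt)
  · intro x hx
    rw [interior_Ioo] at hx
    rw [(g_hasDeriv hx).deriv]
    apply div_nonneg _ (sq_nonneg x)
    have := Real.log_le_sub_one_of_pos (show (0:ℝ) < 1 - x by linarith [hx.2])
    linarith

lemma a2_half (r : ℕ) (hr : 2 ≤ r) (a : ℕ → ℝ)
    (h1 : a r ≤ 1)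
    (hmono : ∀ i ∈ Finset.Icc 1 r, ∀ j ∈ Finset.Icc 1 r, i ≤ j → a i ≤ a j)
    (hsum : (r : ℝ) - 1 ≤ ∑ i ∈ Finset.Icc 1 r, a i) :
    1 / 2 ≤ a 2 := by
  have h2mem : 2 ∈ Finset.Icc 1 r := Finset.mem_Icc.2 ⟨one_le_two, hr⟩
  have hrmem : r ∈ Finset.Icc 1 r := Finset.mem_Icc.2 ⟨by omega, le_rfl⟩
  have hle1 : ∀ i ∈ Finset.Icc 1 r, a i ≤ 1 := fun i hi =>
    le_trans (hmono i hi r hrmem (Finset.mem_Icc.1 hi).2) h1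
  have ha12 : a 1 ≤ a 2 := hmono 1 (Finset.mem_Icc.2 ⟨le_rfl, by omega⟩) 2 h2mem one_le_two
  have e1 : Finset.Icc 1 r = insert 1 (Finset.Icc 2 r) := by
    ext i; simp only [Finset.mem_Icc, Finset.mem_insert]; omega
  have e2 : Finset.Icc 2 r = insert 2 (Finset.Icc 3 r) := by
    ext i; simp only [Finset.mem_Icc, Finset.mem_insert]; omega
  have hn1 : (1:ℕ) ∉ Finset.Icc 2 r := by simp
  have hn2 : (2:ℕ) ∉ Finset.Icc 3 r := by simp
  have hsum3 : ∑ i ∈ Finset.Icc 3 r, a i ≤ (r:ℝ) - 2 := by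
    have hcard : (Finset.Icc 3 r).card = r - 2 := by rw [Nat.card_Icc]; omega
    have := Finset.sum_le_card_nsmul (Finset.Icc 3 r) a 1
      (fun i hi => hle1 i (by simp only [Finset.mem_Icc] at hi ⊢; omega))
    rw [hcard] at this
    have h2 : ((r - 2 : ℕ) : ℝ) = (r:ℝ) - 2 := by
      push_cast [Nat.cast_sub hr]; ring
    simpa [h2] using this
  rw [e1, Finset.sum_insert hn1, e2, Finset.sum_insert hn2] at hsum
  linarith

lemma core (r : ℕ) (hr : 2 ≤ r) (a : ℕ → ℝ)
    (h0 : 0 ≤ a 1) (h1 : a r ≤ 1)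
    (hmono : ∀ i ∈ Finset.Icc 1 r, ∀ j ∈ Finset.Icc 1 r, i ≤ j → a i ≤ a j)
    (hsum : (r : ℝ) - 1 ≤ ∑ i ∈ Finset.Icc 1 r, a i) :
    (((r : ℝ) - 1) / r) ^ (r - 1) ≤ ∏ i ∈ Finset.Icc 2 r, a i := by
  have hrpos : (0:ℝ) < r := by positivity
  have h2mem : 2 ∈ Finset.Icc 1 r := Finset.mem_Icc.2 ⟨one_le_two, hr⟩
  have hrmem : r ∈ Finset.Icc 1 r := Finset.mem_Icc.2 ⟨by omega, le_rfl⟩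
  have hle1 : ∀ i ∈ Finset.Icc 1 r, a i ≤ 1 := fun i hi =>
    le_trans (hmono i hi r hrmem (Finset.mem_Icc.1 hi).2) h1
  have ha12 : a 1 ≤ a 2 := hmono 1 (Finset.mem_Icc.2 ⟨le_rfl, by omega⟩) 2 h2mem one_le_two
  have ha2 : 1/2 ≤ a 2 := a2_half r hr a h1 hmono hsum
  have hsub : ∀ i ∈ Finset.Icc 2 r, i ∈ Finset.Icc 1 r := by
    intro i hi; simp only [Finset.mem_Icc] at hi ⊢; omega
  have ha2le : ∀ i ∈ Finset.Icc 2 r, a 2 ≤ a i := fun i hi =>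
    hmono 2 h2mem i (hsub i hi) (Finset.mem_Icc.1 hi).1
  set t : ℝ := 1 - a 2 with ht_def
  have ht12 : t ≤ 1/2 := by simp only [ht_def]; linarith
  have ht0 : 0 ≤ t := by
    have := hle1 2 h2mem; simp only [ht_def]; linarith
  have hbase0 : (0:ℝ) ≤ ((r:ℝ) - 1) / r := by
    apply div_nonneg _ hrpos.le
    have : (2:ℝ) ≤ r := by exact_mod_cast hr
    linarith
  have hbase1 : ((r:ℝ) - 1) / r ≤ 1 := by
    rw [div_le_one hrpos]; linarith
  rcases eq_or_lt_of_le ht0 with h | htpos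
  · -- t = 0 : all a i = 1 for i in Icc 2 r
    have hprod : ∏ i ∈ Finset.Icc 2 r, a i = 1 := by
      apply Finset.prod_eq_one
      intro i hi
      have h1' := hle1 i (hsub i hi)
      have h2' := ha2le i hi
      have : a 2 = 1 := by simp only [ht_def] at h; linarith
      linarith
    rw [hprod]
    exact pow_le_one₀ hbase0 hbase1
  · -- t > 0
    have ht1 : t < 1 := by linarith
    have haipos : ∀ i ∈ Finset.Icc 2 r, 0 < a i := fun i hi =>
      lt_of_lt_of_le (by linarith : (0:ℝ) < a 2) (ha2le i hi)
    set S : ℝ := ∑ i ∈ Finset.Icc 2 r, (1 - a i) with hS_def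
    have hcard : (Finset.Icc 2 r).card = r - 1 := by rw [Nat.card_Icc]; omega
    have hcardR : ((Finset.Icc 2 r).card : ℝ) = (r:ℝ) - 1 := by
      rw [hcard]; push_cast [Nat.cast_sub (by omega : 1 ≤ r)]; ring
    have hS_le : S ≤ 1 - t := by
      -- S ≤ a 1 ≤ a 2 = 1 - t
      have e1 : Finset.Icc 1 r = insert 1 (Finset.Icc 2 r) := by
        ext i; simp only [Finset.mem_Icc, Finset.mem_insert]; omega
      have hn1 : (1:ℕ) ∉ Finset.Icc 2 r := by simp
      rw [e1, Finset.sum_insert hn1] at hsum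
      have hSe : S = ((r:ℝ) - 1) - ∑ i ∈ Finset.Icc 2 r, a i := by
        rw [hS_def, Finset.sum_sub_distrib, Finset.sum_const, nsmul_eq_mul, mul_one, hcardR]
      rw [hSe]
      simp only [ht_def]; linarith
    have hS_le' : S ≤ ((r:ℝ) - 1) * t := by
      have := Finset.sum_le_card_nsmul (Finset.Icc 2 r) (fun i => 1 - a i) t
        (fun i hi => by have := ha2le i hi; simp only [ht_def]; linarith)
      rw [hcard] at this
      calc S ≤ (r - 1) • t := this
        _ = ((r:ℝ) - 1) * t := by
            rw [nsmul_eq_mul]; push_cast [Nat.cast_sub (by omega : 1 ≤ r)]; ring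
    -- per-term log bound
    have hlogsum : (S / t) * Real.log (1 - t) ≤ ∑ i ∈ Finset.Icc 2 r, Real.log (a i) := by
      have h1' : ∀ i ∈ Finset.Icc 2 r,
          ((1 - a i) / t) * Real.log (1 - t) ≤ Real.log (a i) := by
        intro i hi
        have hc0 : 0 ≤ 1 - a i := by have := hle1 i (hsub i hi); linarith
        have hct : 1 - a i ≤ t := by have := ha2le i hi; simp only [ht_def]; linarith
        have := log_chord hc0 hct ht1 htpos
        simpa using this
      calc (S / t) * Real.log (1 - t)
          = ∑ i ∈ Finset.Icc 2 r, ((1 - a i) / t) * Real.log (1 - t) := by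
            rw [← Finset.sum_mul, ← Finset.sum_div]
        _ ≤ _ := Finset.sum_le_sum h1'
    -- core comparison
    have hLt0 : Real.log (1 - t) ≤ 0 :=
      Real.log_nonpos (by linarith) (by linarith)
    have hkey : ((r:ℝ) - 1) * Real.log (((r:ℝ) - 1) / r) ≤ (S / t) * Real.log (1 - t) := by
      have hinv : (0:ℝ) < 1 / r := by positivity
      have hbasepos : (0:ℝ) < ((r:ℝ) - 1) / r := by
        apply div_pos _ hrpos
        have : (2:ℝ) ≤ r := by exact_mod_cast hr
        linarith
      have hub : (1:ℝ) - 1/r = ((r:ℝ) - 1) / r := by field_simp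
      rcases le_total t (1/r) with hcase | hcase
      · -- t ≤ 1/r
        have hSt : S / t ≤ (r:ℝ) - 1 := by
          rw [div_le_iff₀ htpos]; exact hS_le'
        have hl1 : ((r:ℝ) - 1) * Real.log (1 - t) ≤ (S / t) * Real.log (1 - t) :=
          mul_le_mul_of_nonpos_right hSt hLt0
        have hl2 : Real.log (((r:ℝ) - 1) / r) ≤ Real.log (1 - t) := by
          rw [← hub]
          exact Real.log_le_log (by linarith) (by linarith)
        have hr1 : (0:ℝ) ≤ (r:ℝ) - 1 := by
          have : (2:ℝ) ≤ r := by exact_mod_cast hr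
          linarith
        calc ((r:ℝ) - 1) * Real.log (((r:ℝ) - 1) / r)
            ≤ ((r:ℝ) - 1) * Real.log (1 - t) := mul_le_mul_of_nonneg_left hl2 hr1
          _ ≤ (S / t) * Real.log (1 - t) := hl1
      · -- 1/r ≤ t
        have hl1 : ((1 - t) / t) * Real.log (1 - t) ≤ (S / t) * Real.log (1 - t) :=
          mul_le_mul_of_nonpos_right (by gcongr : S / t ≤ (1 - t) / t) hLt0
        have hmem1 : (1/r : ℝ) ∈ Set.Ioo (0:ℝ) 1 := by
          constructor
          · positivity
          · rw [div_lt_one hrpos]; exact_mod_cast lt_of_lt_of_le one_lt_two hr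
        have hmem2 : t ∈ Set.Ioo (0:ℝ) 1 := ⟨htpos, ht1⟩
        have hg := g_mono hmem1 hmem2 hcase
        simp only at hg
        have egu : (1 - 1/r) * Real.log (1 - 1/r) / (1/r)
            = ((r:ℝ) - 1) * Real.log (((r:ℝ) - 1) / r) := by
          rw [hub]; field_simp
        have egt : (1 - t) * Real.log (1 - t) / t = ((1 - t) / t) * Real.log (1 - t) := by
          ring
        rw [egu, egt] at hg
        linarith
    -- convert back from logs
    have hprod : ∏ i ∈ Finset.Icc 2 r, a i
        = Real.exp (∑ i ∈ Finset.Icc 2 r, Real.log (a i)) := by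
      rw [Real.exp_sum]
      exact Finset.prod_congr rfl fun i hi => (Real.exp_log (haipos i hi)).symm
    have hpow : (((r:ℝ) - 1) / r) ^ (r - 1)
        = Real.exp (((r:ℝ) - 1) * Real.log (((r:ℝ) - 1) / r)) := by
      have hbasepos : (0:ℝ) < ((r:ℝ) - 1) / r := by
        apply div_pos _ hrpos
        have : (2:ℝ) ≤ r := by exact_mod_cast hr
        linarith
      have hcast : (((r - 1 : ℕ)) : ℝ) = (r:ℝ) - 1 := by
        push_cast [Nat.cast_sub (by omega : 1 ≤ r)]; ring
      have hpos' : (0:ℝ) < ((r - 1 : ℕ) : ℝ) / r := by rw [hcast]; exact hbasepos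
      rw [← hcast, Real.exp_nat_mul, Real.exp_log hpos']
    rw [hprod, hpow]
    exact Real.exp_le_exp.2 (le_trans hkey hlogsum)

/-- If `0 ≤ a₁ ≤ … ≤ a_r ≤ 1` with `Σᵢ aᵢ ≥ r - 1`, and `0 ≤ bᵢ ≤ aᵢ` with
`α = Σᵢ (aᵢ - bᵢ) ≤ 1/4`, then `∏_{i=2}^r bᵢ ≥ (1 - 2α) ((r-1)/r)^(r-1)`. -/
theorem product_lower_bound_perturbed (r : ℕ) (hr : 2 ≤ r) (a b : ℕ → ℝ)
    (h0 : 0 ≤ a 1) (h1 : a r ≤ 1)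
    (hmono : ∀ i ∈ Finset.Icc 1 r, ∀ j ∈ Finset.Icc 1 r, i ≤ j → a i ≤ a j)
    (hsum : (r : ℝ) - 1 ≤ ∑ i ∈ Finset.Icc 1 r, a i)
    (hb0 : ∀ i ∈ Finset.Icc 1 r, 0 ≤ b i)
    (hba : ∀ i ∈ Finset.Icc 1 r, b i ≤ a i)
    (hα : ∑ i ∈ Finset.Icc 1 r, (a i - b i) ≤ 1 / 4) :
    (1 - 2 * ∑ i ∈ Finset.Icc 1 r, (a i - b i)) * (((r : ℝ) - 1) / r) ^ (r - 1) ≤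
      ∏ i ∈ Finset.Icc 2 r, b i := by
  have hrpos : (0:ℝ) < r := by positivity
  have h2mem : 2 ∈ Finset.Icc 1 r := Finset.mem_Icc.2 ⟨one_le_two, hr⟩
  have hterm0 : ∀ i ∈ Finset.Icc 1 r, 0 ≤ a i - b i := fun i hi => sub_nonneg.2 (hba i hi)
  set α : ℝ := ∑ i ∈ Finset.Icc 1 r, (a i - b i) with hα_def
  have hα0 : 0 ≤ α := Finset.sum_nonneg hterm0
  have htermle : ∀ i ∈ Finset.Icc 1 r, a i - b i ≤ α := fun i hi =>
    Finset.single_le_sum hterm0 hi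
  have hsubset : Finset.Icc 2 r ⊆ Finset.Icc 1 r := Finset.Icc_subset_Icc (by omega) le_rfl
  have ha2 : 1/2 ≤ a 2 := a2_half r hr a h1 hmono hsum
  have hai : ∀ i ∈ Finset.Icc 2 r, 1/2 ≤ a i := fun i hi =>
    le_trans ha2 (hmono 2 h2mem i (hsubset hi) (Finset.mem_Icc.1 hi).1)
  have haipos : ∀ i ∈ Finset.Icc 2 r, 0 < a i := fun i hi =>
    lt_of_lt_of_le (by norm_num) (hai i hi)
  -- factor the product
  have hprod : ∏ i ∈ Finset.Icc 2 r, b i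
      = (∏ i ∈ Finset.Icc 2 r, a i) * ∏ i ∈ Finset.Icc 2 r, (1 - (a i - b i) / a i) := by
    rw [← Finset.prod_mul_distrib]
    apply Finset.prod_congr rfl
    intro i hi
    have h := (haipos i hi).ne'
    field_simp
    ring
  -- Weierstrass bound
  have hW : 1 - ∑ i ∈ Finset.Icc 2 r, (a i - b i) / a i
      ≤ ∏ i ∈ Finset.Icc 2 r, (1 - (a i - b i) / a i) := by
    apply weier
    · intro i hi
      exact div_nonneg (hterm0 i (hsubset hi)) (haipos i hi).le
    · intro i hi
      rw [div_le_one (haipos i hi)]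
      have := hb0 i (hsubset hi); linarith
  have hsum2 : ∑ i ∈ Finset.Icc 2 r, (a i - b i) / a i ≤ 2 * α := by
    calc ∑ i ∈ Finset.Icc 2 r, (a i - b i) / a i
        ≤ ∑ i ∈ Finset.Icc 2 r, 2 * (a i - b i) := by
          apply Finset.sum_le_sum
          intro i hi
          rw [div_le_iff₀ (haipos i hi)]
          nlinarith [hai i hi, hterm0 i (hsubset hi)]
      _ = 2 * ∑ i ∈ Finset.Icc 2 r, (a i - b i) := by rw [Finset.mul_sum]
      _ ≤ 2 * α := by
          have h2 : ∑ i ∈ Finset.Icc 2 r, (a i - b i) ≤ α :=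
            Finset.sum_le_sum_of_subset_of_nonneg hsubset
              (fun i hi _ => hterm0 i hi)
          linarith
  have hcore := core r hr a h0 h1 hmono hsum
  have hP0 : (0:ℝ) ≤ (((r:ℝ) - 1) / r) ^ (r - 1) := by
    apply pow_nonneg
    apply div_nonneg _ hrpos.le
    have : (2:ℝ) ≤ r := by exact_mod_cast hr
    linarith
  have hA0 : (0:ℝ) ≤ ∏ i ∈ Finset.Icc 2 r, a i :=
    Finset.prod_nonneg fun i hi => (haipos i hi).le
  have h2α : 1 - 2 * α ≤ ∏ i ∈ Finset.Icc 2 r, (1 - (a i - b i) / a i) :=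
    le_trans (by linarith) hW
  have h2α0 : (0:ℝ) ≤ 1 - 2 * α := by rw [hα_def]; linarith [hα]
  rw [hprod]
  calc (1 - 2 * α) * (((r:ℝ) - 1) / r) ^ (r - 1)
      = (((r:ℝ) - 1) / r) ^ (r - 1) * (1 - 2 * α) := mul_comm _ _
    _ ≤ (∏ i ∈ Finset.Icc 2 r, a i) * ∏ i ∈ Finset.Icc 2 r, (1 - (a i - b i) / a i) :=
        mul_le_mul hcore h2α h2α0 hA0
end

section
/- Let H be a finite graph with at least two vertices and let H' be the graph obtained from H by removing a single vertex (together with all edges incident to it). Then r(H') ≤ r(H) ≤ 2·v(H')·r(H'), where v(H') is the number of vertices of H'. -/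
open Finset

/-- A 2-coloring `χ` of the edges of `K_n` contains a monochromatic copy of `H`. -/
def HasMonoCopy {α : Type*} (H : SimpleGraph α) (n : ℕ) (χ : Sym2 (Fin n) → Bool) : Prop :=
  ∃ (b : Bool) (f : α ↪ Fin n), ∀ u v : α, H.Adj u v → χ s(f u, f v) = b

/-- The Ramsey number of a graph `H`: the least `n` such that every red/blue coloring of the
edges of `K_n` contains a monochromatic copy of `H`. -/
noncomputable def ramseyNumber {α : Type*} (H : SimpleGraph α) : ℕ :=
  sInf {n : ℕ | ∀ χ : Sym2 (Fin n) → Bool, HasMonoCopy H n χ}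

section Aux

set_option linter.unusedSectionVars false

variable {V : Type*} [DecidableEq V]

/-- A finset is monochromatic in color `b`. -/
def IsMonoOn (χ : Sym2 V → Bool) (T : Finset V) (b : Bool) : Prop :=
  ∀ x ∈ T, ∀ y ∈ T, x ≠ y → χ s(x, y) = b

lemma isMonoOn_empty (χ : Sym2 V → Bool) (b : Bool) : IsMonoOn χ (∅ : Finset V) b := by
  intro x hx; simp at hx

lemma isMonoOn_insert {χ : Sym2 V → Bool} {T : Finset V} {b : Bool} {x : V}
    (hmono : IsMonoOn χ T b) (hx : ∀ y ∈ T, χ s(x, y) = b) :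
    IsMonoOn χ (insert x T) b := by
  intro a ha c hc hac
  rcases Finset.mem_insert.mp ha with h1 | h1
  · rcases Finset.mem_insert.mp hc with h2 | h2
    · exact absurd (h1.trans h2.symm) hac
    · rw [h1]; exact hx c h2
  · rcases Finset.mem_insert.mp hc with h2 | h2
    · rw [h2, Sym2.eq_swap]; exact hx a h1
    · exact hmono a h1 c h2 hac

/-- Finite Ramsey theorem with bound `(s+t).choose s`. -/
lemma ramsey_aux : ∀ (k s t : ℕ), s + t ≤ k → ∀ (χ : Sym2 V → Bool) (S : Finset V),
    (s + t).choose s ≤ S.card →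
    (∃ T ⊆ S, T.card = s ∧ IsMonoOn χ T true) ∨
      (∃ T ⊆ S, T.card = t ∧ IsMonoOn χ T false) := by
  intro k
  induction k with
  | zero =>
      intro s t hst χ S _
      have hs : s = 0 := by omega
      exact Or.inl ⟨∅, by simp, by simp [hs], isMonoOn_empty χ true⟩
  | succ k ih =>
      intro s t hst χ S hS
      rcases Nat.eq_zero_or_pos s with hs | hs
      · exact Or.inl ⟨∅, by simp, by simp [hs], isMonoOn_empty χ true⟩
      rcases Nat.eq_zero_or_pos t with ht | ht
      · exact Or.inr ⟨∅, by simp, by simp [ht], isMonoOn_empty χ false⟩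
      obtain ⟨s', rfl⟩ : ∃ s', s = s' + 1 := ⟨s - 1, by omega⟩
      obtain ⟨t', rfl⟩ : ∃ t', t = t' + 1 := ⟨t - 1, by omega⟩
      have hSpos : 0 < S.card := lt_of_lt_of_le (Nat.choose_pos (by omega)) hS
      obtain ⟨x, hx⟩ := Finset.card_pos.mp hSpos
      set A := (S.erase x).filter (fun y => χ s(x, y) = true) with hA
      set B := (S.erase x).filter (fun y => ¬(χ s(x, y) = true)) with hB
      have hAsub : A ⊆ S := fun y hy =>
        Finset.erase_subset _ _ (Finset.filter_subset _ _ hy)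
      have hBsub : B ⊆ S := fun y hy =>
        Finset.erase_subset _ _ (Finset.filter_subset _ _ hy)
      have hAB : A.card + B.card = S.card - 1 := by
        rw [hA, hB, Finset.card_filter_add_card_filter_not,
          Finset.card_erase_of_mem hx]
      have hpascal : (s' + 1 + (t' + 1)).choose (s' + 1)
          = (s' + (t' + 1)).choose s' + (s' + 1 + t').choose (s' + 1) := by
        have h1 : s' + 1 + (t' + 1) = (s' + (t' + 1)) + 1 := by omega
        rw [h1, Nat.choose_succ_succ]
        congr 2
        omega
      by_cases hAc : (s' + (t' + 1)).choose s' ≤ A.card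
      · rcases ih s' (t' + 1) (by omega) χ A hAc with ⟨T, hTA, hTc, hTm⟩ | ⟨T, hTA, hTc, hTm⟩
        · have hxT : x ∉ T := fun hxT => (Finset.notMem_erase x S)
            (Finset.filter_subset _ _ (hTA hxT))
          refine Or.inl ⟨insert x T, ?_, ?_, ?_⟩
          · intro y hy
            rcases Finset.mem_insert.mp hy with h1 | h1
            · rw [h1]; exact hx
            · exact hAsub (hTA h1)
          · rw [Finset.card_insert_of_notMem hxT, hTc]
          · exact isMonoOn_insert hTm fun y hy => (Finset.mem_filter.mp (hTA hy)).2
        · exact Or.inr ⟨T, fun y hy => hAsub (hTA hy), hTc, hTm⟩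
      · have hBc : (s' + 1 + t').choose (s' + 1) ≤ B.card := by omega
        rcases ih (s' + 1) t' (by omega) χ B hBc with ⟨T, hTB, hTc, hTm⟩ | ⟨T, hTB, hTc, hTm⟩
        · exact Or.inl ⟨T, fun y hy => hBsub (hTB hy), hTc, hTm⟩
        · have hxT : x ∉ T := fun hxT => (Finset.notMem_erase x S)
            (Finset.filter_subset _ _ (hTB hxT))
          refine Or.inr ⟨insert x T, ?_, ?_, ?_⟩
          · intro y hy
            rcases Finset.mem_insert.mp hy with h1 | h1
            · rw [h1]; exact hx
            · exact hBsub (hTB h1)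
          · rw [Finset.card_insert_of_notMem hxT, hTc]
          · refine isMonoOn_insert hTm fun y hy => ?_
            have := (Finset.mem_filter.mp (hTB hy)).2
            simpa using this

/-- Every sufficiently large finset contains a monochromatic subset of size `m`. -/
lemma exists_mono_subset (χ : Sym2 V → Bool) (S : Finset V) (m : ℕ)
    (h : (2 * m).choose m ≤ S.card) :
    ∃ b, ∃ T ⊆ S, T.card = m ∧ IsMonoOn χ T b := by
  have h' : (m + m).choose m ≤ S.card := by rwa [← two_mul]
  rcases ramsey_aux (m + m) m m le_rfl χ S h' with ⟨T, h1, h2, h3⟩ | ⟨T, h1, h2, h3⟩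
  · exact ⟨true, T, h1, h2, h3⟩
  · exact ⟨false, T, h1, h2, h3⟩

/-- A monochromatic set of size `card β` contains a copy of any graph on `β`. -/
lemma clique_copy {β : Type*} [Fintype β] (H : SimpleGraph β) (χ : Sym2 V → Bool)
    (T : Finset V) (hT : T.card = Fintype.card β) (b : Bool) (hmono : IsMonoOn χ T b) :
    ∃ f : β ↪ V, (∀ a, f a ∈ T) ∧ ∀ u w, H.Adj u w → χ s(f u, f w) = b := by
  have hcard : Fintype.card β = Fintype.card T := by rw [Fintype.card_coe, hT]
  let e : β ≃ T := Fintype.equivOfCardEq hcard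
  refine ⟨⟨fun a => (e a : V), fun a c hac => e.injective (Subtype.ext hac)⟩,
    fun a => (e a).2, fun u w huw => ?_⟩
  exact hmono _ (e u).2 _ (e w).2
    (fun h => H.irrefl (by rwa [e.injective (Subtype.ext h)] at huw))

/-- Greedy construction of a monochromatic clique when every vertex has few
off-color neighbours. -/
lemma greedy_clique (χ : Sym2 V → Bool) (b : Bool) (r : ℕ) (hr : 1 ≤ r) :
    ∀ (m : ℕ) (N : Finset V),
      (∀ x ∈ N, (((N.erase x)).filter (fun y => ¬(χ s(x, y) = b))).card < r) →
      m * r ≤ N.card → ∃ T ⊆ N, T.card = m ∧ IsMonoOn χ T b := by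
  intro m
  induction m with
  | zero => exact fun N _ _ => ⟨∅, by simp, by simp, isMonoOn_empty χ b⟩
  | succ m ih =>
      intro N hdeg hcard
      have hNpos : 0 < N.card := by nlinarith
      obtain ⟨x, hx⟩ := Finset.card_pos.mp hNpos
      set G := (N.erase x).filter (fun y => χ s(x, y) = b) with hG
      have hGsub : G ⊆ N := fun y hy =>
        Finset.erase_subset _ _ (Finset.filter_subset _ _ hy)
      have hsum : G.card + ((N.erase x).filter (fun y => ¬(χ s(x, y) = b))).card
          = N.card - 1 := by
        rw [hG, Finset.card_filter_add_card_filter_not, Finset.card_erase_of_mem hx]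
      have hbad := hdeg x hx
      have hsum' : G.card + ((N.erase x).filter (fun y => ¬(χ s(x, y) = b))).card + 1
          = N.card := by omega
      have hcard' : m * r + r ≤ N.card := by
        have h1 : (m + 1) * r = m * r + r := by ring
        linarith [hcard, h1.symm.le, h1.le]
      have hGcard : m * r ≤ G.card := by linarith
      have hdeg' : ∀ x' ∈ G, (((G.erase x')).filter (fun y => ¬(χ s(x', y) = b))).card < r := by
        intro x' hx'
        refine lt_of_le_of_lt ?_ (hdeg x' (hGsub hx'))
        apply Finset.card_le_card
        apply Finset.filter_subset_filter
        intro y hy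
        have h1 : y ∈ G := Finset.mem_of_mem_erase hy
        have h2 : y ≠ x' := Finset.ne_of_mem_erase hy
        exact Finset.mem_erase.mpr ⟨h2, hGsub h1⟩
      obtain ⟨T, hTG, hTc, hTm⟩ := ih G hdeg' hGcard
      have hxT : x ∉ T := fun h => Finset.notMem_erase x N (Finset.filter_subset _ _ (hTG h))
      refine ⟨insert x T, ?_, ?_, ?_⟩
      · intro y hy
        rcases Finset.mem_insert.mp hy with h1 | h1
        · rw [h1]; exact hx
        · exact hGsub (hTG h1)
      · rw [Finset.card_insert_of_notMem hxT, hTc]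
      · exact isMonoOn_insert hTm fun y hy => (Finset.mem_filter.mp (hTG hy)).2

/-- If every coloring of `K_r` contains a mono copy of `H`, then every finset of size `≥ r`
in any colored complete graph contains a mono copy of `H`. -/
lemma hasCopy_of_card {β : Type*} (H : SimpleGraph β) {r : ℕ}
    (hP : ∀ χ' : Sym2 (Fin r) → Bool, ∃ (b : Bool) (f : β ↪ Fin r), ∀ u w, H.Adj u w → χ' s(f u, f w) = b)
    (χ : Sym2 V → Bool) (S : Finset V) (h : r ≤ S.card) :
    ∃ (b : Bool) (f : β ↪ V), (∀ a, f a ∈ S) ∧ ∀ u w, H.Adj u w → χ s(f u, f w) = b := by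
  obtain ⟨T, hTS, hTc⟩ := Finset.exists_subset_card_eq h
  have hcard : Fintype.card T = r := by rw [Fintype.card_coe, hTc]
  let e : T ≃ Fin r := Fintype.equivFinOfCardEq hcard
  let g : Fin r ↪ V := ⟨fun i => (e.symm i : V),
    fun i j hij => by simpa using e.symm.injective (Subtype.ext hij)⟩
  obtain ⟨b, f, hf⟩ := hP (fun p => χ (p.map g))
  refine ⟨b, f.trans g, fun a => hTS (e.symm (f a)).2, fun u w huw => ?_⟩
  have := hf u w huw
  rwa [Sym2.map_pair_eq] at this

end Aux

/-- Nonemptiness of the Ramsey set: big complete graphs contain mono copies. -/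
lemma ramsey_set_nonempty {β : Type*} [Fintype β] (H : SimpleGraph β) :
    ∀ χ : Sym2 (Fin ((2 * Fintype.card β).choose (Fintype.card β))) → Bool,
      HasMonoCopy H ((2 * Fintype.card β).choose (Fintype.card β)) χ := by
  intro χ
  obtain ⟨b, T, _, hTc, hTm⟩ := exists_mono_subset χ Finset.univ (Fintype.card β) (by simp)
  obtain ⟨f, _, hf⟩ := clique_copy H χ T hTc b hTm
  exact ⟨b, f, hf⟩

/-- The core combinatorial step: `r(H) ≤ 2 m r` where `m = v(H')`, `r = r(H')`. -/
lemma ramsey_step2 {α : Type*} [Fintype α] [DecidableEq α] (H : SimpleGraph α) (v : α)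
    (m r : ℕ) (hm1 : 1 ≤ m) (hr1 : 1 ≤ r)
    (hmcard : Fintype.card {u : α | u ≠ v} = m)
    (hrP : ∀ χ' : Sym2 (Fin r) → Bool, HasMonoCopy (H.induce {u : α | u ≠ v}) r χ')
    (χ : Sym2 (Fin (2 * m * r)) → Bool) : HasMonoCopy H (2 * m * r) χ := by
  set q := m * r with hq
  have hq1 : 1 ≤ q := by
    calc 1 = 1 * 1 := by ring
    _ ≤ m * r := Nat.mul_le_mul hm1 hr1
  have hnpos : 0 < 2 * m * r := by
    rw [mul_assoc, ← hq]; omega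
  set u₀ : Fin (2 * m * r) := ⟨0, hnpos⟩ with hu₀
  set W : Finset (Fin (2 * m * r)) := Finset.univ.erase u₀ with hWdef
  have hW : W.card + 1 = 2 * q := by
    rw [hWdef, Finset.card_erase_of_mem (Finset.mem_univ _), Finset.card_univ,
      Fintype.card_fin, mul_assoc, ← hq]
    omega
  have hsplit : (W.filter (fun y => χ s(u₀, y) = true)).card
      + (W.filter (fun y => χ s(u₀, y) = false)).card = W.card := by
    have heqf : W.filter (fun a => ¬(χ s(u₀, a) = true))
        = W.filter (fun y => χ s(u₀, y) = false) := by
      ext y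
      simp [Finset.mem_filter]
    have h0 := Finset.card_filter_add_card_filter_not (s := W)
      (p := fun y => χ s(u₀, y) = true)
    rw [heqf] at h0
    exact h0
  have hbig : ∃ b : Bool, q ≤ (W.filter (fun y => χ s(u₀, y) = b)).card := by
    by_contra h
    push_neg at h
    have h1 := h true
    have h2 := h false
    omega
  obtain ⟨b, hb⟩ := hbig
  rw [hq] at hb
  obtain ⟨N, hNsub, hNcard⟩ := Finset.exists_subset_card_eq hb
  have hN : ∀ y ∈ N, χ s(u₀, y) = b ∧ y ≠ u₀ := fun y hy =>
    ⟨(Finset.mem_filter.mp (hNsub hy)).2,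
      Finset.ne_of_mem_erase (Finset.mem_filter.mp (hNsub hy)).1⟩
  by_cases hcopy : ∃ f : {u : α | u ≠ v} ↪ Fin (2 * m * r), (∀ a, f a ∈ N) ∧
      ∀ u w, (H.induce {u : α | u ≠ v}).Adj u w → χ s(f u, f w) = b
  · -- a b-colored copy of H' inside N; extend by u₀
    obtain ⟨f', hf'N, hf'e⟩ := hcopy
    have hinj : Function.Injective (fun a : α => if h : a = v then u₀ else f' ⟨a, h⟩) := by
      intro a c h
      dsimp only at h
      split_ifs at h with h1 h2 h2
      · rw [h1, h2]
      · exact absurd h.symm (hN _ (hf'N _)).2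
      · exact absurd h (hN _ (hf'N _)).2
      · exact congrArg Subtype.val (f'.injective h)
    refine ⟨b, ⟨_, hinj⟩, fun a c hac => ?_⟩
    simp only [Function.Embedding.coeFn_mk]
    rcases eq_or_ne a v with ha | ha
    · rcases eq_or_ne c v with hc | hc
      · rw [ha, hc] at hac
        exact (H.irrefl hac).elim
      · rw [dif_pos ha, dif_neg hc]
        exact (hN _ (hf'N ⟨c, hc⟩)).1
    · rcases eq_or_ne c v with hc | hc
      · rw [dif_neg ha, dif_pos hc, Sym2.eq_swap]
        exact (hN _ (hf'N ⟨a, ha⟩)).1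
      · rw [dif_neg ha, dif_neg hc]
        exact hf'e ⟨a, ha⟩ ⟨c, hc⟩ hac
  · by_cases hstar : ∃ x ∈ N, r ≤ ((N.erase x).filter (fun y => χ s(x, y) = !b)).card
    · -- a vertex with many !b neighbours in N: find a !b copy of H' there and extend
      obtain ⟨x, hxN, hxr⟩ := hstar
      set S := (N.erase x).filter (fun y => χ s(x, y) = !b) with hSdef
      have hSN : S ⊆ N := fun y hy =>
        Finset.erase_subset _ _ (Finset.filter_subset _ _ hy)
      have hxS : x ∉ S := fun h =>
        Finset.notMem_erase x N (Finset.filter_subset _ _ h)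
      obtain ⟨c, f', hf'S, hf'e⟩ :=
        hasCopy_of_card (H.induce {u : α | u ≠ v}) hrP χ S hxr
      have hcc : c = !b := by
        by_contra hcb
        have hcb' : c = b := by cases c <;> cases b <;> simp_all
        exact hcopy ⟨f', fun a => hSN (hf'S a), hcb' ▸ hf'e⟩
      subst hcc
      have hSe : ∀ y ∈ S, χ s(x, y) = !b := fun y hy => (Finset.mem_filter.mp hy).2
      have hinj : Function.Injective (fun a : α => if h : a = v then x else f' ⟨a, h⟩) := by
        intro a c h
        dsimp only at h
        split_ifs at h with h1 h2 h2
        · rw [h1, h2]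
        · exact absurd (h.symm ▸ hf'S ⟨c, h2⟩) hxS
        · exact absurd (h ▸ hf'S ⟨a, h1⟩) hxS
        · exact congrArg Subtype.val (f'.injective h)
      refine ⟨!b, ⟨_, hinj⟩, fun a c hac => ?_⟩
      simp only [Function.Embedding.coeFn_mk]
      rcases eq_or_ne a v with ha | ha
      · rcases eq_or_ne c v with hc | hc
        · rw [ha, hc] at hac
          exact (H.irrefl hac).elim
        · rw [dif_pos ha, dif_neg hc]
          exact hSe _ (hf'S ⟨c, hc⟩)
      · rcases eq_or_ne c v with hc | hc
        · rw [dif_neg ha, dif_pos hc, Sym2.eq_swap]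
          exact hSe _ (hf'S ⟨a, ha⟩)
        · rw [dif_neg ha, dif_neg hc]
          exact hf'e ⟨a, ha⟩ ⟨c, hc⟩ hac
    · -- every vertex of N has < r off-color neighbours: greedy b-clique of size m
      push_neg at hstar
      have heq : ∀ x : Fin (2 * m * r), (N.erase x).filter (fun y => ¬(χ s(x, y) = b))
          = (N.erase x).filter (fun y => χ s(x, y) = !b) := by
        intro x
        apply Finset.filter_congr
        intro y _
        simp [Bool.eq_not_iff]
      obtain ⟨T, hTN, hTc, hTm⟩ := greedy_clique χ b r hr1 m N
        (fun x hx => by rw [heq x]; exact hstar x hx) (le_of_eq hNcard.symm)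
      obtain ⟨f'', hf''T, hf''e⟩ := clique_copy (H.induce {u : α | u ≠ v}) χ T
        (hTc.trans hmcard.symm) b hTm
      exact absurd ⟨f'', fun a => hTN (hf''T a), hf''e⟩ hcopy

/-- If `H'` is obtained from `H` by deleting one vertex, then
`r(H') ≤ r(H) ≤ 2 v(H') r(H')`. -/
theorem ramsey_vertex_removal {α : Type*} [Fintype α] [DecidableEq α]
    (H : SimpleGraph α) (hcard : 2 ≤ Fintype.card α) (v : α) :
    ramseyNumber (H.induce {u : α | u ≠ v}) ≤ ramseyNumber H ∧
      ramseyNumber H ≤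
        2 * (Fintype.card α - 1) * ramseyNumber (H.induce {u : α | u ≠ v}) := by
  classical
  set H' := H.induce {u : α | u ≠ v} with hH'
  have hcardβ : Fintype.card {u : α | u ≠ v} = Fintype.card α - 1 := Set.card_ne_eq v
  have hneH : {n : ℕ | ∀ χ : Sym2 (Fin n) → Bool, HasMonoCopy H n χ}.Nonempty :=
    ⟨_, ramsey_set_nonempty H⟩
  have hneH' : {n : ℕ | ∀ χ : Sym2 (Fin n) → Bool, HasMonoCopy H' n χ}.Nonempty :=
    ⟨_, ramsey_set_nonempty H'⟩
  have hmemH : ∀ χ : Sym2 (Fin (ramseyNumber H)) → Bool,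
      HasMonoCopy H (ramseyNumber H) χ := Nat.sInf_mem hneH
  have hmemH' : ∀ χ : Sym2 (Fin (ramseyNumber H')) → Bool,
      HasMonoCopy H' (ramseyNumber H') χ := Nat.sInf_mem hneH'
  constructor
  · -- r(H') ≤ r(H)
    apply Nat.sInf_le
    intro χ
    obtain ⟨b, f, hf⟩ := hmemH χ
    exact ⟨b, (Function.Embedding.subtype _).trans f, fun u w huw => hf _ _ huw⟩
  · -- r(H) ≤ 2 (card α - 1) r(H')
    have hm1 : 1 ≤ Fintype.card α - 1 := by omega
    have hβne : ∃ u : α, u ≠ v := Fintype.exists_ne_of_one_lt_card (by omega) v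
    have hr1 : 1 ≤ ramseyNumber H' := by
      by_contra h
      have h0 : ramseyNumber H' = 0 := by omega
      obtain ⟨u, hu⟩ := hβne
      obtain ⟨b, f, -⟩ := hmemH' (fun _ => true)
      have := (f ⟨u, hu⟩).isLt
      omega
    exact Nat.sInf_le fun χ =>
      ramsey_step2 H v (Fintype.card α - 1) (ramseyNumber H') hm1 hr1 hcardβ hmemH' χ
end

section
/- For every positive integer k there exists n₀ such that for all n ≥ n₀ the following holds. For every red/blue coloring of the edges of the complete graph K_n, there is a vertex subset U with |U| ≥ n/3 and a color (red or blue) such that at least one of the following holds: (i) U contains at least 12^{−k}·C(n,k) monochromatic k-cliques in that color, and every such monochromatic k-clique in U extends to at least n/2 monochromatic (k+1)-cliques of the same color in the whole graph; or (ii) every vertex of U has both red degree and blue degree at least (n−3)/(12k). -/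
open Finset Nat

lemma ncard_filter_eq' {α : Type*} [Fintype α] (p : α → Prop) [DecidablePred p] :
    {x | p x}.ncard = (Finset.univ.filter p).card := by
  rw [← Set.ncard_coe_finset]; congr 1; ext x; simp

/-- monochromatic `j`-cliques inside `U`. -/
def mcl {n : ℕ} (χ : Sym2 (Fin n) → Bool) (b : Bool) (U : Finset (Fin n)) (j : ℕ) :
    Finset (Finset (Fin n)) :=
  U.powerset.filter (fun K => K.card = j ∧ ∀ u ∈ K, ∀ v ∈ K, u ≠ v → χ s(u, v) = b)

lemma mem_mcl {n : ℕ} {χ : Sym2 (Fin n) → Bool} {b : Bool} {U : Finset (Fin n)} {j : ℕ}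
    {K : Finset (Fin n)} :
    K ∈ mcl χ b U j ↔ K ⊆ U ∧ K.card = j ∧ ∀ u ∈ K, ∀ v ∈ K, u ≠ v → χ s(u, v) = b := by
  simp [mcl, and_assoc]

lemma mcl_step {n : ℕ} (χ : Sym2 (Fin n) → Bool) (b : Bool) (U : Finset (Fin n))
    (D j : ℕ)
    (hD : ∀ v ∈ U, (((U.erase v)).filter (fun u => χ s(v, u) ≠ b)).card ≤ D) :
    (mcl χ b U j).card * (U.card - j * (D + 1)) ≤ (mcl χ b U (j + 1)).card * (j + 1) := by
  classical
  set bad : Fin n → Finset (Fin n) := fun v => (U.erase v).filter (fun u => χ s(v, u) ≠ b)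
    with hbad
  set ext : Finset (Fin n) → Finset (Fin n) := fun K => (U \ K) \ K.biUnion bad with hext
  have key1 : ∀ K ∈ mcl χ b U j, U.card - j * (D + 1) ≤ (ext K).card := by
    intro K hK
    obtain ⟨hKU, hKc, -⟩ := mem_mcl.1 hK
    have h1 : (U \ K).card = U.card - j := by rw [card_sdiff_of_subset hKU, hKc]
    have h2 : (K.biUnion bad).card ≤ j * D := by
      calc (K.biUnion bad).card ≤ ∑ u ∈ K, (bad u).card := card_biUnion_le
        _ ≤ ∑ _u ∈ K, D := sum_le_sum fun u hu => hD u (hKU hu)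
        _ = j * D := by rw [sum_const, hKc, smul_eq_mul]
    have h3 : (U \ K).card - (K.biUnion bad).card ≤ (ext K).card :=
      le_card_sdiff (K.biUnion bad) (U \ K)
    have h4 : j * (D + 1) = j * D + j := by ring
    omega
  have key2 : ((mcl χ b U j).sigma ext).card ≤
      ((mcl χ b U (j + 1)).sigma (fun L => L)).card := by
    apply card_le_card_of_injOn
      (fun p : Σ _ : Finset (Fin n), Fin n => (⟨insert p.2 p.1, p.2⟩ : Σ _ : Finset (Fin n), Fin n))
    · rintro ⟨K, w⟩ hp
      rw [mem_coe, mem_sigma] at hp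
      obtain ⟨hK, hw⟩ := hp
      obtain ⟨hKU, hKc, hmono⟩ := mem_mcl.1 hK
      rw [hext] at hw
      simp only [mem_sdiff] at hw
      obtain ⟨⟨hwU, hwK⟩, hwb⟩ := hw
      have hgood : ∀ u ∈ K, χ s(u, w) = b := by
        intro u hu
        by_contra hne
        exact hwb (mem_biUnion.2 ⟨u, hu, by
          simp only [hbad, mem_filter, mem_erase]
          exact ⟨⟨fun h => hwK (h ▸ hu), hwU⟩, hne⟩⟩)
      rw [mem_coe, mem_sigma]
      constructor
      · rw [mem_mcl]
        refine ⟨insert_subset hwU hKU, ?_, ?_⟩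
        · rw [card_insert_of_notMem hwK, hKc]
        · intro u hu v hv huv
          rcases mem_insert.1 hu with rfl | hu' <;> rcases mem_insert.1 hv with rfl | hv'
          · exact absurd rfl huv
          · have := hgood v hv'
            rwa [Sym2.eq_swap] at this
          · exact hgood u hu'
          · exact hmono u hu' v hv' huv
      · exact mem_insert_self _ _
    · rintro ⟨K, w⟩ hK ⟨K', w'⟩ hK' heq
      have h1 : insert w K = insert w' K' := congrArg (fun p => p.fst) heq
      have h2 : w = w' := congrArg (fun p => p.snd) heq
      subst h2
      simp only [mem_coe, mem_sigma] at hK hK'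
      have hwK : w ∉ K := by
        have := hK.2; rw [hext] at this; simp only [mem_sdiff] at this; exact this.1.2
      have hwK' : w ∉ K' := by
        have := hK'.2; rw [hext] at this; simp only [mem_sdiff] at this; exact this.1.2
      have : K = K' := by
        rw [← erase_insert hwK, ← erase_insert hwK', h1]
      simp [this]
  have hS1 : (mcl χ b U j).card * (U.card - j * (D + 1)) ≤
      ∑ K ∈ mcl χ b U j, (ext K).card := by
    calc (mcl χ b U j).card * (U.card - j * (D + 1))
        = ∑ _K ∈ mcl χ b U j, (U.card - j * (D + 1)) := by rw [sum_const, smul_eq_mul]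
      _ ≤ _ := sum_le_sum key1
  have hS3 : ((mcl χ b U (j + 1)).sigma (fun L => L)).card = (mcl χ b U (j + 1)).card * (j + 1) := by
    rw [Finset.card_sigma]
    calc ∑ L ∈ mcl χ b U (j + 1), L.card = ∑ _L ∈ mcl χ b U (j + 1), (j + 1) :=
          sum_congr rfl fun L hL => (mem_mcl.1 hL).2.1
      _ = _ := by rw [sum_const, smul_eq_mul]
  calc (mcl χ b U j).card * (U.card - j * (D + 1)) ≤ ∑ K ∈ mcl χ b U j, (ext K).card := hS1
    _ = ((mcl χ b U j).sigma ext).card := (Finset.card_sigma _ _).symm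
    _ ≤ ((mcl χ b U (j + 1)).sigma (fun L => L)).card := key2
    _ = _ := hS3

lemma mcl_zero {n : ℕ} (χ : Sym2 (Fin n) → Bool) (b : Bool) (U : Finset (Fin n)) :
    mcl χ b U 0 = {∅} := by
  ext K
  simp only [mem_mcl, mem_singleton, Finset.card_eq_zero]
  constructor
  · rintro ⟨-, rfl, -⟩; rfl
  · rintro rfl; simp

lemma mcl_pow_le {n : ℕ} (χ : Sym2 (Fin n) → Bool) (b : Bool) (U : Finset (Fin n))
    (k : ℕ) (c : ℝ) (hc : 0 ≤ c)
    (h : ∀ j < k, c * ((mcl χ b U j).card : ℝ) ≤ ((mcl χ b U (j + 1)).card : ℝ) * (j + 1)) :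
    c ^ k ≤ ((mcl χ b U k).card : ℝ) * (k)! := by
  induction k with
  | zero => simp [mcl_zero]
  | succ j ih =>
    have ihj := ih (fun i hi => h i (Nat.lt_succ_of_lt hi))
    have hj := h j (Nat.lt_succ_self j)
    have hfac : (0:ℝ) ≤ (j)! := by positivity
    calc c ^ (j + 1) = c * c ^ j := by ring
      _ ≤ c * (((mcl χ b U j).card : ℝ) * (j)!) := mul_le_mul_of_nonneg_left ihj hc
      _ = (c * ((mcl χ b U j).card : ℝ)) * (j)! := by ring
      _ ≤ (((mcl χ b U (j + 1)).card : ℝ) * (j + 1)) * (j)! := mul_le_mul_of_nonneg_right hj hfac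
      _ = ((mcl χ b U (j + 1)).card : ℝ) * (j + 1)! := by
          rw [Nat.factorial_succ]; push_cast; ring

/-- For every `k` and every sufficiently large `n`, every red/blue coloring of `K_n` has a
vertex set `U` with `|U| ≥ n/3` and a color `b` such that either `U` contains at least
`12^{-k} C(n,k)` monochromatic `K_k` in color `b`, each extending to at least `n/2`
monochromatic `K_{k+1}` in color `b`, or every vertex of `U` has both red and blue degree at
least `(n-3)/(12k)`. -/
theorem mono_cliques_or_bidegree (k : ℕ) (hk : 1 ≤ k) :
    ∃ n₀ : ℕ, ∀ n : ℕ, n₀ ≤ n → ∀ χ : Sym2 (Fin n) → Bool,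
      ∃ (U : Finset (Fin n)) (b : Bool), (n : ℝ) / 3 ≤ (U.card : ℝ) ∧
        (((12 : ℝ)⁻¹ ^ k * (n.choose k : ℝ) ≤
            ({K : Finset (Fin n) | K ⊆ U ∧ K.card = k ∧
                ∀ u ∈ K, ∀ v ∈ K, u ≠ v → χ s(u, v) = b}.ncard : ℝ)) ∧
          (∀ K : Finset (Fin n), K ⊆ U → K.card = k →
            (∀ u ∈ K, ∀ v ∈ K, u ≠ v → χ s(u, v) = b) →
            (n : ℝ) / 2 ≤
              ({w : Fin n | w ∉ K ∧ ∀ u ∈ K, χ s(w, u) = b}.ncard : ℝ)) ∨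
          ∀ v ∈ U,
            ((n : ℝ) - 3) / (12 * k) ≤
              ({u : Fin n | u ≠ v ∧ χ s(v, u) = true}.ncard : ℝ) ∧
            ((n : ℝ) - 3) / (12 * k) ≤
              ({u : Fin n | u ≠ v ∧ χ s(v, u) = false}.ncard : ℝ)) := by
  classical
  have bool_ne : ∀ x y : Bool, (x ≠ !y) ↔ x = y := by decide
  refine ⟨24 * k + 24, fun n hn χ => ?_⟩
  have hk1 : (1 : ℝ) ≤ (k : ℝ) := by exact_mod_cast hk
  have hn' : (24 : ℝ) * k + 24 ≤ (n : ℝ) := by exact_mod_cast hn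
  set t : ℝ := ((n : ℝ) - 3) / (12 * k) with ht
  have hkpos : (0 : ℝ) < 12 * k := by linarith
  have htk : t * (12 * k) = (n : ℝ) - 3 := div_mul_cancel₀ _ (ne_of_gt hkpos)
  have ht0 : 0 ≤ t := div_nonneg (by linarith) (le_of_lt hkpos)
  set deg : Bool → Fin n → Finset (Fin n) :=
    fun c v => univ.filter (fun u => u ≠ v ∧ χ s(v, u) = c) with hdeg
  have hdegn : ∀ (c : Bool) (v : Fin n),
      {u : Fin n | u ≠ v ∧ χ s(v, u) = c}.ncard = (deg c v).card := fun c v =>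
    ncard_filter_eq' _
  by_cases hU₀ : (n : ℝ) / 3 ≤ ((univ.filter (fun v : Fin n =>
      t ≤ ((deg true v).card : ℝ) ∧ t ≤ ((deg false v).card : ℝ))).card : ℝ)
  · refine ⟨_, true, hU₀, Or.inr fun v hv => ?_⟩
    obtain ⟨-, h1, h2⟩ := mem_filter.1 hv
    rw [hdegn, hdegn]
    exact ⟨h1, h2⟩
  · push_neg at hU₀
    set A : Bool → Finset (Fin n) := fun c =>
      univ.filter (fun v => ¬ t ≤ ((deg c v).card : ℝ)) with hA
    have hcover : (n : ℝ) ≤ ((univ.filter (fun v : Fin n =>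
        t ≤ ((deg true v).card : ℝ) ∧ t ≤ ((deg false v).card : ℝ))).card : ℝ)
        + (A true).card + (A false).card := by
      have hsub : (univ : Finset (Fin n)) ⊆ (univ.filter (fun v : Fin n =>
          t ≤ ((deg true v).card : ℝ) ∧ t ≤ ((deg false v).card : ℝ)))
          ∪ (A true ∪ A false) := by
        intro v _
        simp only [hA, mem_union, mem_filter, mem_univ, true_and]
        tauto
      have h3 := card_le_card hsub
      have h4 := card_union_le (univ.filter (fun v : Fin n =>
          t ≤ ((deg true v).card : ℝ) ∧ t ≤ ((deg false v).card : ℝ))) (A true ∪ A false)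
      have h5 := card_union_le (A true) (A false)
      have h6 : (univ : Finset (Fin n)).card = n := by simp
      have : n ≤ (univ.filter (fun v : Fin n =>
          t ≤ ((deg true v).card : ℝ) ∧ t ≤ ((deg false v).card : ℝ))).card
          + ((A true).card + (A false).card) := by omega
      exact_mod_cast le_trans (by exact_mod_cast this) (by push_cast; linarith)
    obtain ⟨b, hbcard⟩ : ∃ b : Bool, (n : ℝ) / 3 ≤ ((A b).card : ℝ) := by
      rcases le_total ((A true).card : ℝ) ((A false).card : ℝ) with h | h
      · exact ⟨false, by linarith⟩
      · exact ⟨true, by linarith⟩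
    have hdef : ∀ v ∈ A b, ((deg b v).card : ℝ) < t := by
      intro v hv
      have := (mem_filter.1 hv).2
      exact lt_of_not_ge this
    have hD : ∀ v ∈ A b,
        (((A b).erase v).filter (fun u => χ s(v, u) ≠ !b)).card ≤ ⌊t⌋₊ := by
      intro v hv
      apply Nat.le_floor
      have hsub : ((A b).erase v).filter (fun u => χ s(v, u) ≠ !b) ⊆ deg b v := by
        intro u hu
        simp only [mem_filter, mem_erase] at hu
        simp only [hdeg, mem_filter, mem_univ, true_and]
        exact ⟨hu.1.1, (bool_ne _ _).1 hu.2⟩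
      calc ((((A b).erase v).filter (fun u => χ s(v, u) ≠ !b)).card : ℝ)
          ≤ ((deg b v).card : ℝ) := by exact_mod_cast card_le_card hsub
        _ ≤ t := le_of_lt (hdef v hv)
    have hfl : ((⌊t⌋₊ : ℕ) : ℝ) ≤ t := Nat.floor_le ht0
    have hstep : ∀ j < k, ((n : ℝ) / 12) * ((mcl χ (!b) (A b) j).card : ℝ) ≤
        ((mcl χ (!b) (A b) (j + 1)).card : ℝ) * (j + 1) := by
      intro j hj
      have hnat := mcl_step χ (!b) (A b) ⌊t⌋₊ j hD
      have hj' : (j : ℝ) + 1 ≤ (k : ℝ) := by exact_mod_cast hj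
      have hle : (n : ℝ) / 12 + ((j * (⌊t⌋₊ + 1) : ℕ) : ℝ) ≤ ((A b).card : ℝ) := by
        push_cast
        have h1 : (j : ℝ) * ((⌊t⌋₊ : ℝ) + 1) ≤ ((k : ℝ) - 1) * (t + 1) := by
          apply mul_le_mul (by linarith) (by linarith) (by positivity) (by linarith)
        nlinarith [hbcard, htk, hn', hk1]
      have hn12 : (0 : ℝ) ≤ (n : ℝ) / 12 := by positivity
      have hsubn : j * (⌊t⌋₊ + 1) ≤ (A b).card := by
        have : ((j * (⌊t⌋₊ + 1) : ℕ) : ℝ) ≤ ((A b).card : ℝ) := by linarith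
        exact_mod_cast this
      have hcast : (((A b).card - j * (⌊t⌋₊ + 1) : ℕ) : ℝ)
          = ((A b).card : ℝ) - ((j * (⌊t⌋₊ + 1) : ℕ) : ℝ) := by
        exact Nat.cast_sub hsubn
      have hnat' : ((mcl χ (!b) (A b) j).card : ℝ) * (((A b).card - j * (⌊t⌋₊ + 1) : ℕ) : ℝ)
          ≤ ((mcl χ (!b) (A b) (j + 1)).card : ℝ) * ((j : ℝ) + 1) := by
        exact_mod_cast hnat
      have hc_le : (n : ℝ) / 12 ≤ (((A b).card - j * (⌊t⌋₊ + 1) : ℕ) : ℝ) := by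
        rw [hcast]; linarith
      calc ((n : ℝ) / 12) * ((mcl χ (!b) (A b) j).card : ℝ)
          ≤ (((A b).card - j * (⌊t⌋₊ + 1) : ℕ) : ℝ) * ((mcl χ (!b) (A b) j).card : ℝ) :=
            mul_le_mul_of_nonneg_right hc_le (Nat.cast_nonneg _)
        _ = ((mcl χ (!b) (A b) j).card : ℝ) * (((A b).card - j * (⌊t⌋₊ + 1) : ℕ) : ℝ) :=
            mul_comm _ _
        _ ≤ _ := hnat'
    have hpow := mcl_pow_le χ (!b) (A b) k ((n : ℝ) / 12) (by positivity) hstep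
    refine ⟨A b, !b, hbcard, Or.inl ⟨?_, ?_⟩⟩
    · have hset : {K : Finset (Fin n) | K ⊆ A b ∧ K.card = k ∧
          ∀ u ∈ K, ∀ v ∈ K, u ≠ v → χ s(u, v) = !b} = ↑(mcl χ (!b) (A b) k) := by
        ext K
        simp [mem_mcl]
      rw [hset, Set.ncard_coe_finset]
      have hch : ((n.choose k : ℕ) : ℝ) ≤ (n : ℝ) ^ k / (k)! := Nat.choose_le_pow_div k n
      have hfacpos : (0 : ℝ) < (k)! := by positivity
      have heq : (12 : ℝ)⁻¹ ^ k * ((n : ℝ) ^ k / (k)!) = ((n : ℝ) / 12) ^ k / (k)! := by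
        rw [div_pow, inv_pow]; ring
      have h1 : (12 : ℝ)⁻¹ ^ k * (n.choose k : ℝ) ≤ (12 : ℝ)⁻¹ ^ k * ((n : ℝ) ^ k / (k)!) :=
        mul_le_mul_of_nonneg_left hch (by positivity)
      have h2 : ((n : ℝ) / 12) ^ k / (k)! ≤ ((mcl χ (!b) (A b) k).card : ℝ) :=
        (div_le_iff₀ hfacpos).2 hpow
      linarith
    · intro K hKU hKc hmono
      rw [ncard_filter_eq' (fun w : Fin n => w ∉ K ∧ ∀ u ∈ K, χ s(w, u) = !b)]
      set good := univ.filter (fun w : Fin n => w ∉ K ∧ ∀ u ∈ K, χ s(w, u) = !b) with hgood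
      have hsub : (univ : Finset (Fin n)) ⊆ good ∪ (K ∪ K.biUnion (deg b)) := by
        intro w _
        by_cases hwK : w ∈ K
        · simp [mem_union, hwK]
        · by_cases hall : ∀ u ∈ K, χ s(w, u) = !b
          · simp only [hgood, mem_union, mem_filter, mem_univ, true_and]
            exact Or.inl ⟨hwK, hall⟩
          · push_neg at hall
            obtain ⟨u, hu, hne⟩ := hall
            have hwu : w ≠ u := fun h => hwK (h ▸ hu)
            have : w ∈ deg b u := by
              simp only [hdeg, mem_filter, mem_univ, true_and]
              refine ⟨hwu, ?_⟩
              rw [Sym2.eq_swap]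
              exact (bool_ne _ _).1 hne
            simp only [mem_union, mem_biUnion]
            exact Or.inr (Or.inr ⟨u, hu, this⟩)
      have hcards : n ≤ good.card + k + ∑ u ∈ K, (deg b u).card := by
        have h3 := card_le_card hsub
        have h4 := card_union_le good (K ∪ K.biUnion (deg b))
        have h5 := card_union_le K (K.biUnion (deg b))
        have h6 : (K.biUnion (deg b)).card ≤ ∑ u ∈ K, (deg b u).card := card_biUnion_le
        have h7 : (univ : Finset (Fin n)).card = n := by simp
        omega
      have hsum : ((∑ u ∈ K, (deg b u).card : ℕ) : ℝ) ≤ (k : ℝ) * t := by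
        push_cast
        calc ∑ u ∈ K, ((deg b u).card : ℝ) ≤ ∑ _u ∈ K, t :=
              sum_le_sum fun u hu => le_of_lt (hdef u (hKU hu))
          _ = (k : ℝ) * t := by rw [sum_const, hKc, nsmul_eq_mul]
      have hcards' : (n : ℝ) ≤ (good.card : ℝ) + (k : ℝ) + ((∑ u ∈ K, (deg b u).card : ℕ) : ℝ) := by
        exact_mod_cast hcards
      have h8 : 12 * ((k : ℝ) * t) = (n : ℝ) - 3 := by linear_combination htk
      linarith [hcards', hsum, h8, hn', hk1]
end
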